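/- arXiv:1311.3473 — 6 statements merged into one kernel-verified Lean document; each statement's English description precedes it below -/
import Mathlib

section
/- Let H = (s_{i+j})_{i,j∈ℕ} be a Hankel moment matrix (so the s_n are real, s_n = ∫ x^n dμ for a positive measure μ on ℝ, and H is Hermitian positive definite) such that lim_{n→∞} λ_n > 0. Then Σ_{n=0}^∞ s_n² = ∞; in particular H does not define a linear mapping from c₀₀ into ℓ² by matrix multiplication. -/
open MeasureTheory Filter Matrix
open scoped ComplexOrder Topology

noncomputable section

/-- The `(n+1) × (n+1)` leading principal truncation of an infinite matrix. -/
def trunc (M : ℕ → ℕ → ℂ) (n : ℕ) : Matrix (Fin (n + 1)) (Fin (n + 1)) ℂ :=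
  Matrix.of fun i j => M i j

/-- An infinite matrix is Hermitian positive definite (HPD) if every leading principal
truncation is positive definite (equivalently, it is Hermitian and all leading
principal minors are positive). -/
def IsHPD (M : ℕ → ℕ → ℂ) : Prop := ∀ n, (trunc M n).PosDef

/-- The smallest eigenvalue of the truncation `M_n`, as the minimum of the Rayleigh
quotient `v M_n v^* / (v v^*)` over nonzero `v ∈ ℂ^{n+1}`. -/
def smallestEig (M : ℕ → ℕ → ℂ) (n : ℕ) : ℝ :=
  ⨅ v : {v : Fin (n + 1) → ℂ // v ≠ 0},
    (∑ i : Fin (n + 1), ∑ j : Fin (n + 1), v.1 i * M i j * (starRingEnd ℂ) (v.1 j)).re / ∑ i, Complex.normSq (v.1 i)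

/-- `B` is the transition matrix of `M`: upper triangular, positive diagonal,
with `B_nᵗ M_n conj(B_n) = I` for all `n`. -/
def IsTransition (M B : ℕ → ℕ → ℂ) : Prop :=
  (∀ k n, n < k → B k n = 0) ∧
  (∀ n, 0 < (B n n).re ∧ (B n n).im = 0) ∧
  (∀ n, (trunc B n)ᵀ * trunc M n * (trunc B n).map (starRingEnd ℂ) = 1)

/-- Operator norm of a finite matrix acting on the Euclidean space `ℂ^n`. -/
def opNorm {n : ℕ} (A : Matrix (Fin n) (Fin n) ℂ) : ℝ :=
  ‖LinearMap.toContinuousLinearMap (Matrix.toEuclideanLin A)‖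

lemma rayleigh_nonneg (M : ℕ → ℕ → ℂ) (n : ℕ) (h : (trunc M n).PosDef)
    (v : Fin (n + 1) → ℂ) (hv : v ≠ 0) :
    0 ≤ (∑ i : Fin (n + 1), ∑ j : Fin (n + 1), v i * M i j * (starRingEnd ℂ) (v j)).re / ∑ i, Complex.normSq (v i) := by
  apply div_nonneg
  · have hx : star v ≠ 0 := by
      simpa using star_ne_zero.mpr hv
    have := h.dotProduct_mulVec_pos hx
    have hkey : star (star v) ⬝ᵥ (trunc M n) *ᵥ (star v)
        = ∑ i : Fin (n + 1), ∑ j : Fin (n + 1), v i * M i j * (starRingEnd ℂ) (v j) := by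
      simp [dotProduct, Matrix.mulVec, trunc, Finset.mul_sum, mul_comm, mul_assoc, mul_left_comm]
    rw [hkey] at this
    have := (Complex.lt_def.mp this).1
    simpa using this.le
  · exact Finset.sum_nonneg fun i _ => Complex.normSq_nonneg _

lemma smallestEig_le (M : ℕ → ℕ → ℂ) (n : ℕ) (h : (trunc M n).PosDef) :
    smallestEig M n ≤ (M n n).re := by
  set e : Fin (n + 1) → ℂ := fun i => if i = Fin.last n then 1 else 0 with he
  have hne : e ≠ 0 := by
    intro h0
    have : e (Fin.last n) = 0 := by rw [h0]; rfl
    simp [he] at this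
  have hbdd : BddBelow (Set.range fun v : {v : Fin (n + 1) → ℂ // v ≠ 0} =>
      (∑ i : Fin (n + 1), ∑ j : Fin (n + 1), v.1 i * M i j * (starRingEnd ℂ) (v.1 j)).re / ∑ i, Complex.normSq (v.1 i)) := by
    refine ⟨0, ?_⟩
    rintro x ⟨v, rfl⟩
    exact rayleigh_nonneg M n h v.1 v.2
  have hle := ciInf_le hbdd (⟨e, hne⟩ : {v : Fin (n + 1) → ℂ // v ≠ 0})
  have hnum : (∑ i : Fin (n + 1), ∑ j : Fin (n + 1), e i * M i j * (starRingEnd ℂ) (e j)) = M n n := by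
    simp [he, Finset.sum_ite_eq', apply_ite, Fin.val_last]
  have hden : ∑ i, Complex.normSq (e i) = 1 := by
    simp [he, apply_ite Complex.normSq]
  rw [smallestEig]
  calc (⨅ v : {v : Fin (n + 1) → ℂ // v ≠ 0}, _) ≤ _ := hle
  _ = (M n n).re := by rw [hnum, hden, div_one]

/-- for a Hankel moment matrix `H = (s_{i+j})` with `lim λ_n > 0`,
the series `Σ s_n²` diverges; in particular `H` does not map the finitely
supported sequences into `ℓ²`. -/
theorem stmt4 (μ : Measure ℝ) (s : ℕ → ℝ)
    (hint : ∀ n : ℕ, Integrable (fun x => x ^ n) μ)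
    (hs : ∀ n : ℕ, s n = ∫ x, x ^ n ∂μ)
    (hHPD : IsHPD fun i j => (s (i + j) : ℂ))
    (lam : ℝ) (hlam : Tendsto (smallestEig fun i j => (s (i + j) : ℂ)) atTop (𝓝 lam))
    (hpos : 0 < lam) :
    ¬ Summable (fun n => s n ^ 2) ∧
    ∃ v : ℕ → ℂ, v.support.Finite ∧
      ¬ Summable fun i => ‖∑ᶠ j, (s (i + j) : ℂ) * v j‖ ^ 2 := by
  have key : ¬ Summable (fun n => s n ^ 2) := by
    intro hsum
    have h0 : Tendsto (fun n => s n ^ 2) atTop (𝓝 0) := hsum.tendsto_atTop_zero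
    have hdouble : Tendsto (fun n : ℕ => 2 * n) atTop atTop :=
      tendsto_atTop_atTop_of_monotone (fun a b h => by omega) (fun b => ⟨b, by omega⟩)
    have h2 : Tendsto (fun n => s (2 * n) ^ 2) atTop (𝓝 0) := h0.comp hdouble
    have hev : ∀ᶠ n in atTop, lam / 2 < smallestEig (fun i j => (s (i + j) : ℂ)) n :=
      hlam.eventually (eventually_gt_nhds (by linarith))
    have hev2 : ∀ᶠ n in atTop, (lam / 2) ^ 2 ≤ s (2 * n) ^ 2 := by
      filter_upwards [hev] with n hn
      have hle := smallestEig_le (fun i j => (s (i + j) : ℂ)) n (hHPD n)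
      simp only [Complex.ofReal_re] at hle
      have hnn : lam / 2 ≤ s (n + n) := le_trans hn.le hle
      have h2n : 2 * n = n + n := by omega
      rw [h2n]
      exact pow_le_pow_left₀ (by linarith) hnn 2
    have := ge_of_tendsto h2 hev2
    nlinarith
  refine ⟨key, ⟨fun j => if j = 0 then 1 else 0, ?_, ?_⟩⟩
  · apply Set.Finite.subset (Set.finite_singleton 0)
    intro j hj
    by_contra h
    simp only [Set.mem_singleton_iff] at h
    simp [Function.mem_support, h] at hj
  · have heq : ∀ i : ℕ, (∑ᶠ j, (s (i + j) : ℂ) * (if j = 0 then 1 else 0)) = (s i : ℂ) := by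
      intro i
      rw [finsum_eq_single _ 0 (fun j hj => by simp [hj])]
      simp
    intro hsum
    apply key
    have : (fun i => ‖∑ᶠ j, (s (i + j) : ℂ) * (if j = 0 then (1:ℂ) else 0)‖ ^ 2) = fun i => s i ^ 2 := by
      funext i
      rw [heq i]
      simp [Complex.norm_real, sq_abs]
    rwa [this] at hsum
end
end

section
/- Let T = (c_{j-i})_{i,j∈ℕ} be an infinite Hermitian positive definite Toeplitz matrix with lim_{n→∞} λ_n > 0. If Σ_{n=0}^∞ |c_n|² < ∞, then the matrix A = conj(B) B^t (where B is the transition matrix of T) exists and satisfies A T = T A = I, with all matrix products defined entrywise by convergent series. -/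
open MeasureTheory Filter Matrix
open scoped ComplexOrder Topology

noncomputable section

/-- The infinite Toeplitz matrix `(c_{j-i})_{i,j}`. -/
def Toep (c : ℤ → ℂ) : ℕ → ℕ → ℂ := fun i j => c ((j : ℤ) - (i : ℤ))

namespace Stmt5Aux

/-- Partial sums of the matrix `A = conj(B) Bᵗ`. -/
def Ssum (B : ℕ → ℕ → ℂ) (n i j : ℕ) : ℂ :=
  ∑ l ∈ Finset.range (n + 1), (starRingEnd ℂ) (B i l) * B j l

lemma Ssum_conj (B : ℕ → ℕ → ℂ) (n i j : ℕ) :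
    Ssum B n j i = (starRingEnd ℂ) (Ssum B n i j) := by
  simp [Ssum, map_sum, _root_.map_mul, mul_comm]

lemma diag_eq (B : ℕ → ℕ → ℂ) (n i : ℕ) :
    Ssum B n i i = ((∑ l ∈ Finset.range (n + 1), Complex.normSq (B i l) : ℝ) : ℂ) := by
  rw [Ssum]
  push_cast
  exact Finset.sum_congr rfl fun l _ => by rw [mul_comm, Complex.mul_conj]

section M

variable {M B : ℕ → ℕ → ℂ} {lam : ℝ}

lemma inv_aux (hB3 : ∀ n, (trunc B n)ᵀ * trunc M n * (trunc B n).map (starRingEnd ℂ) = 1)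
    (n : ℕ) :
    ((trunc B n).map (starRingEnd ℂ) * (trunc B n)ᵀ) * trunc M n = 1 ∧
    trunc M n * ((trunc B n).map (starRingEnd ℂ) * (trunc B n)ᵀ) = 1 := by
  have h := hB3 n
  have h1 : ((trunc B n).map (starRingEnd ℂ) * (trunc B n)ᵀ) * trunc M n = 1 := by
    rw [Matrix.mul_assoc]
    exact mul_eq_one_comm.mp h
  exact ⟨h1, mul_eq_one_comm.mp h1⟩

lemma entry_C (B : ℕ → ℕ → ℂ) (n : ℕ) (a k : Fin (n + 1)) :
    ((trunc B n).map (starRingEnd ℂ) * (trunc B n)ᵀ) a k = Ssum B n a k := by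
  rw [Matrix.mul_apply, Ssum,
    ← Fin.sum_univ_eq_sum_range (fun l => (starRingEnd ℂ) (B a l) * B k l) (n + 1)]
  simp [trunc]

lemma inv_left (hB3 : ∀ n, (trunc B n)ᵀ * trunc M n * (trunc B n).map (starRingEnd ℂ) = 1)
    {n i j : ℕ} (hi : i ≤ n) (hj : j ≤ n) :
    ∑ k ∈ Finset.range (n + 1), Ssum B n i k * M k j = if i = j then 1 else 0 := by
  have h := (inv_aux hB3 n).1
  have e : (((trunc B n).map (starRingEnd ℂ) * (trunc B n)ᵀ) * trunc M n)
        (⟨i, by omega⟩ : Fin (n + 1)) (⟨j, by omega⟩ : Fin (n + 1))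
      = (1 : Matrix (Fin (n + 1)) (Fin (n + 1)) ℂ) ⟨i, by omega⟩ ⟨j, by omega⟩ := by rw [h]
  rw [Matrix.mul_apply] at e
  simp only [entry_C] at e
  rw [← Fin.sum_univ_eq_sum_range (fun k => Ssum B n i k * M k j) (n + 1)]
  simpa [Matrix.one_apply, trunc, Fin.mk.injEq] using e

lemma inv_right (hB3 : ∀ n, (trunc B n)ᵀ * trunc M n * (trunc B n).map (starRingEnd ℂ) = 1)
    {n i j : ℕ} (hi : i ≤ n) (hj : j ≤ n) :
    ∑ k ∈ Finset.range (n + 1), M i k * Ssum B n k j = if i = j then 1 else 0 := by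
  have h := (inv_aux hB3 n).2
  have e : (trunc M n * ((trunc B n).map (starRingEnd ℂ) * (trunc B n)ᵀ))
        (⟨i, by omega⟩ : Fin (n + 1)) (⟨j, by omega⟩ : Fin (n + 1))
      = (1 : Matrix (Fin (n + 1)) (Fin (n + 1)) ℂ) ⟨i, by omega⟩ ⟨j, by omega⟩ := by rw [h]
  rw [Matrix.mul_apply] at e
  simp only [entry_C] at e
  rw [← Fin.sum_univ_eq_sum_range (fun k => M i k * Ssum B n k j) (n + 1)]
  simpa [Matrix.one_apply, trunc, Fin.mk.injEq] using e

lemma num_re_pos (hM : IsHPD M) (n : ℕ) (v : Fin (n + 1) → ℂ) (hv : v ≠ 0) :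
    0 < (∑ i : Fin (n + 1), ∑ j : Fin (n + 1), v i * M i j * (starRingEnd ℂ) (v j)).re := by
  have hsv : (star v : Fin (n + 1) → ℂ) ≠ 0 := star_ne_zero.mpr hv
  have h := (hM n).dotProduct_mulVec_pos hsv
  have hz : v ⬝ᵥ (trunc M n) *ᵥ (star v)
      = ∑ i : Fin (n + 1), ∑ j : Fin (n + 1), v i * M i j * (starRingEnd ℂ) (v j) := by
    unfold dotProduct Matrix.mulVec dotProduct
    refine Finset.sum_congr rfl fun i _ => ?_
    rw [Finset.mul_sum]
    refine Finset.sum_congr rfl fun j _ => ?_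
    show v i * ((M (i : ℕ) (j : ℕ)) * star (v j)) = _
    rw [← starRingEnd_apply, mul_assoc]
  rw [star_star, hz] at h
  exact (Complex.lt_def.mp h).1

lemma quot_bddBelow (hM : IsHPD M) (n : ℕ) :
    BddBelow (Set.range fun v : {v : Fin (n + 1) → ℂ // v ≠ 0} =>
      (∑ i : Fin (n + 1), ∑ j : Fin (n + 1), v.1 i * M i j * (starRingEnd ℂ) (v.1 j)).re /
        ∑ i, Complex.normSq (v.1 i)) := by
  refine ⟨0, ?_⟩
  rintro x ⟨v, rfl⟩
  exact div_nonneg (num_re_pos hM n v.1 v.2).le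
    (Finset.sum_nonneg fun _ _ => Complex.normSq_nonneg _)

instance nonempty_nonzero (m : ℕ) : Nonempty {v : Fin (m + 1) → ℂ // v ≠ 0} :=
  ⟨⟨fun _ => 1, fun h => one_ne_zero (congrFun h 0)⟩⟩

set_option maxRecDepth 8000 in
lemma smallestEig_antitone (hM : IsHPD M) : Antitone (smallestEig M) := by
  apply antitone_nat_of_succ_le
  intro n
  unfold smallestEig
  apply le_ciInf
  rintro ⟨v, hv⟩
  have hw : (Fin.snoc v 0 : Fin (n + 2) → ℂ) ≠ 0 := by
    intro h0
    apply hv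
    funext k
    have h1 := congrFun h0 k.castSucc
    rw [Fin.snoc_castSucc] at h1
    simpa using h1
  set w : Fin (n + 2) → ℂ := Fin.snoc v 0 with hwdef
  have hle := ciInf_le (quot_bddBelow hM (n + 1)) ⟨w, hw⟩
  refine hle.trans (le_of_eq ?_)
  have hnum : (∑ i : Fin (n + 2), ∑ j : Fin (n + 2),
      w i * M i j * (starRingEnd ℂ) (w j))
      = ∑ i : Fin (n + 1), ∑ j : Fin (n + 1), v i * M i j * (starRingEnd ℂ) (v j) := by
    rw [Fin.sum_univ_castSucc]
    simp only [hwdef, Fin.snoc_last, zero_mul, Finset.sum_const_zero, add_zero]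
    refine Finset.sum_congr rfl fun i _ => ?_
    rw [Fin.sum_univ_castSucc]
    simp [Fin.snoc_castSucc, Fin.snoc_last, Fin.coe_castSucc, mul_zero, add_zero]
  have hden : (∑ i : Fin (n + 2), Complex.normSq (w i))
      = ∑ i : Fin (n + 1), Complex.normSq (v i) := by
    rw [Fin.sum_univ_castSucc]
    simp [hwdef, Fin.snoc_castSucc, Fin.snoc_last]
  rw [hnum, hden]

lemma lam_le_smallestEig (hM : IsHPD M)
    (hlam : Tendsto (smallestEig M) atTop (𝓝 lam)) (n : ℕ) :
    lam ≤ smallestEig M n :=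
  le_of_tendsto hlam (eventually_atTop.mpr ⟨n, fun _ hm => smallestEig_antitone hM hm⟩)

lemma qform (hM : IsHPD M) (hlam : Tendsto (smallestEig M) atTop (𝓝 lam))
    (n : ℕ) (v : Fin (n + 1) → ℂ) :
    lam * ∑ i, Complex.normSq (v i)
      ≤ (∑ i : Fin (n + 1), ∑ j : Fin (n + 1), v i * M i j * (starRingEnd ℂ) (v j)).re := by
  by_cases hv : v = 0
  · simp [hv]
  · have h1 : lam ≤ (∑ i : Fin (n + 1), ∑ j : Fin (n + 1),
        v i * M i j * (starRingEnd ℂ) (v j)).re / ∑ i, Complex.normSq (v i) :=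
      (lam_le_smallestEig hM hlam n).trans (ciInf_le (quot_bddBelow hM n) ⟨v, hv⟩)
    have hden : 0 < ∑ i, Complex.normSq (v i) := by
      obtain ⟨a, ha⟩ := Function.ne_iff.mp hv
      exact Finset.sum_pos' (fun _ _ => Complex.normSq_nonneg _)
        ⟨a, Finset.mem_univ a, Complex.normSq_pos.mpr ha⟩
    exact (le_div_iff₀ hden).mp h1

lemma bounds (hM : IsHPD M) (hlam : Tendsto (smallestEig M) atTop (𝓝 lam)) (hpos : 0 < lam)
    (hB3 : ∀ n, (trunc B n)ᵀ * trunc M n * (trunc B n).map (starRingEnd ℂ) = 1)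
    {n i : ℕ} (hi : i ≤ n) :
    (∑ k ∈ Finset.range (n + 1), ‖Ssum B n i k‖ ^ 2 ≤ 1 / lam ^ 2) ∧
    ((Ssum B n i i).re ≤ 1 / lam) := by
  have hq := qform hM hlam n (fun k => Ssum B n i (k : ℕ))
  have hnum : (∑ a : Fin (n + 1), ∑ b : Fin (n + 1),
      Ssum B n i (a : ℕ) * M a b * (starRingEnd ℂ) (Ssum B n i (b : ℕ)))
      = (starRingEnd ℂ) (Ssum B n i i) := by
    rw [Finset.sum_comm]
    have hrow : ∀ b : Fin (n + 1),
        (∑ a : Fin (n + 1), Ssum B n i (a : ℕ) * M a b * (starRingEnd ℂ) (Ssum B n i (b : ℕ)))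
          = (if i = (b : ℕ) then 1 else 0) * (starRingEnd ℂ) (Ssum B n i (b : ℕ)) := by
      intro b
      rw [← Finset.sum_mul]
      congr 1
      rw [← inv_left hB3 hi (Nat.lt_succ_iff.mp b.isLt),
        ← Fin.sum_univ_eq_sum_range (fun k => Ssum B n i k * M k (b : ℕ)) (n + 1)]
    rw [Finset.sum_congr rfl fun b _ => hrow b]
    rw [Finset.sum_eq_single (⟨i, by omega⟩ : Fin (n + 1))]
    · simp
    · intro b _ hb
      have hne : i ≠ (b : ℕ) := by
        intro h
        exact hb (by ext; simp [← h])
      simp [hne]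
    · simp
  have hre : (∑ a : Fin (n + 1), ∑ b : Fin (n + 1),
      Ssum B n i (a : ℕ) * M a b * (starRingEnd ℂ) (Ssum B n i (b : ℕ))).re
      = (Ssum B n i i).re := by
    rw [hnum, Complex.conj_re]
  have hdenQ : (∑ a : Fin (n + 1), Complex.normSq (Ssum B n i (a : ℕ)))
      = ∑ k ∈ Finset.range (n + 1), ‖Ssum B n i k‖ ^ 2 := by
    rw [← Fin.sum_univ_eq_sum_range (fun k => ‖Ssum B n i k‖ ^ 2) (n + 1)]
    exact Finset.sum_congr rfl fun a _ => by
      rw [Complex.normSq_eq_norm_sq]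
  set Q : ℝ := ∑ k ∈ Finset.range (n + 1), ‖Ssum B n i k‖ ^ 2 with hQdef
  set d : ℝ := (Ssum B n i i).re with hddef
  have hq' : lam * Q ≤ d := by
    rw [← hdenQ]
    exact le_trans hq (le_of_eq hre)
  have hd0 : 0 ≤ d := by
    rw [hddef, diag_eq]
    simpa using Finset.sum_nonneg fun l (_ : l ∈ Finset.range (n + 1)) =>
      Complex.normSq_nonneg (B i l)
  have hdQ : d ^ 2 ≤ Q := by
    have h1 : d ≤ ‖Ssum B n i i‖ := by
      exact Complex.re_le_norm _
    have h2 : d ^ 2 ≤ ‖Ssum B n i i‖ ^ 2 := by nlinarith [norm_nonneg (Ssum B n i i)]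
    refine h2.trans ?_
    exact Finset.single_le_sum (f := fun k => ‖Ssum B n i k‖ ^ 2)
      (fun k _ => sq_nonneg _) (Finset.mem_range.mpr (Nat.lt_succ_of_le hi))
  have hQ0 : 0 ≤ Q := Finset.sum_nonneg fun k _ => sq_nonneg _
  have hld : lam * d ^ 2 ≤ d :=
    le_trans (mul_le_mul_of_nonneg_left hdQ hpos.le) hq'
  have hdle : d ≤ 1 / lam := by
    rcases eq_or_lt_of_le hd0 with h | h
    · rw [← h]; positivity
    · rw [le_div_iff₀ hpos]
      nlinarith [mul_pos h hpos]
  have h1d : lam * (1 / lam) = 1 := by field_simp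
  constructor
  · rw [le_div_iff₀ (by positivity : (0:ℝ) < lam ^ 2)]
    nlinarith [mul_le_mul_of_nonneg_left hdle hpos.le]
  · exact hdle

lemma col_bound (hM : IsHPD M) (hlam : Tendsto (smallestEig M) atTop (𝓝 lam)) (hpos : 0 < lam)
    (hB3 : ∀ n, (trunc B n)ᵀ * trunc M n * (trunc B n).map (starRingEnd ℂ) = 1)
    {n j : ℕ} (hj : j ≤ n) :
    ∑ k ∈ Finset.range (n + 1), ‖Ssum B n k j‖ ^ 2 ≤ 1 / lam ^ 2 := by
  have h := (bounds hM hlam hpos hB3 hj).1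
  refine le_trans (le_of_eq ?_) h
  exact Finset.sum_congr rfl fun k _ => by rw [Ssum_conj, RCLike.norm_conj]

end M

lemma cs_bound (s : Finset ℕ) (f g : ℕ → ℝ) (hf : ∀ k, 0 ≤ f k) (hg : ∀ k, 0 ≤ g k) :
    ∑ k ∈ s, f k * g k ≤ Real.sqrt (∑ k ∈ s, f k ^ 2) * Real.sqrt (∑ k ∈ s, g k ^ 2) := by
  have h := Finset.sum_mul_sq_le_sq_mul_sq s f g
  have h0 : 0 ≤ ∑ k ∈ s, f k * g k := Finset.sum_nonneg fun k _ => mul_nonneg (hf k) (hg k)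
  calc ∑ k ∈ s, f k * g k = Real.sqrt ((∑ k ∈ s, f k * g k) ^ 2) := (Real.sqrt_sq h0).symm
    _ ≤ Real.sqrt ((∑ k ∈ s, f k ^ 2) * ∑ k ∈ s, g k ^ 2) := Real.sqrt_le_sqrt h
    _ = _ := Real.sqrt_mul (Finset.sum_nonneg fun k _ => sq_nonneg _) _

set_option maxHeartbeats 1000000 in
/-- The main convergence engine. -/
lemma main_conv {lam : ℝ} (hpos : 0 < lam) (φ ψ : ℕ → ℂ) (ψn : ℕ → ℕ → ℂ) (δ : ℂ) (n0 : ℕ)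
    (hten : ∀ k, Tendsto (fun n => ψn n k) atTop (𝓝 (ψ k)))
    (hid : ∀ n, n0 ≤ n → ∑ k ∈ Finset.range (n + 1), ψn n k * φ k = δ)
    (hbd : ∀ n, n0 ≤ n → ∑ k ∈ Finset.range (n + 1), ‖ψn n k‖ ^ 2 ≤ 1 / lam ^ 2)
    (hφ : Summable fun k => ‖φ k‖ ^ 2)
    (hψ2 : ∀ m, ∑ k ∈ Finset.range m, ‖ψ k‖ ^ 2 ≤ 1 / lam ^ 2) :
    HasSum (fun k => ψ k * φ k) δ := by
  have hψsum : Summable fun k => ‖ψ k‖ ^ 2 :=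
    summable_of_sum_range_le (fun k => sq_nonneg _) hψ2
  have hnorm : Summable fun k => ‖ψ k * φ k‖ := by
    refine Summable.of_nonneg_of_le (fun k => norm_nonneg _)
      (fun k => ?_) (((hψsum.add hφ)).div_const 2)
    rw [norm_mul]
    nlinarith [sq_nonneg (‖ψ k‖ - ‖φ k‖), norm_nonneg (ψ k), norm_nonneg (φ k)]
  have hS : Summable fun k => ψ k * φ k := .of_norm hnorm
  rw [hS.hasSum_iff_tendsto_nat]
  have key : ∀ m, n0 + 1 ≤ m → ∀ n, m ≤ n →
      ‖(∑ k ∈ Finset.range m, ψn n k * φ k) - δ‖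
        ≤ (1 / lam) * Real.sqrt (∑' k, ‖φ (k + m)‖ ^ 2) := by
    intro m hm n hn
    have hn0 : n0 ≤ n := by omega
    have hsplit := Finset.sum_range_add_sum_Ico (fun k => ψn n k * φ k)
      (show m ≤ n + 1 by omega)
    have heq : (∑ k ∈ Finset.range m, ψn n k * φ k) - δ
        = -(∑ k ∈ Finset.Ico m (n + 1), ψn n k * φ k) := by
      rw [← hid n hn0, ← hsplit]; ring
    rw [heq, norm_neg]
    have h1 : ‖∑ k ∈ Finset.Ico m (n + 1), ψn n k * φ k‖
        ≤ ∑ k ∈ Finset.Ico m (n + 1), ‖ψn n k‖ * ‖φ k‖ := by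
      refine (norm_sum_le _ _).trans (le_of_eq ?_)
      exact Finset.sum_congr rfl fun k _ => norm_mul _ _
    have h2 := cs_bound (Finset.Ico m (n + 1)) (fun k => ‖ψn n k‖) (fun k => ‖φ k‖)
      (fun k => norm_nonneg _) (fun k => norm_nonneg _)
    have h3 : ∑ k ∈ Finset.Ico m (n + 1), ‖ψn n k‖ ^ 2 ≤ 1 / lam ^ 2 := by
      refine le_trans ?_ (hbd n hn0)
      refine Finset.sum_le_sum_of_subset_of_nonneg ?_ (fun k _ _ => sq_nonneg _)
      rw [Finset.range_eq_Ico]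
      exact Finset.Ico_subset_Ico (Nat.zero_le m) le_rfl
    have hshift : Summable fun k => ‖φ (k + m)‖ ^ 2 := (summable_nat_add_iff m).mpr hφ
    have h4 : ∑ k ∈ Finset.Ico m (n + 1), ‖φ k‖ ^ 2 ≤ ∑' k, ‖φ (k + m)‖ ^ 2 := by
      rw [Finset.sum_Ico_eq_sum_range]
      refine le_trans (le_of_eq (Finset.sum_congr rfl fun k _ => by rw [Nat.add_comm m k])) ?_
      exact Summable.sum_le_tsum _ (fun k _ => sq_nonneg _) hshift
    have h5 : Real.sqrt (∑ k ∈ Finset.Ico m (n + 1), ‖ψn n k‖ ^ 2) ≤ 1 / lam := by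
      have := Real.sqrt_le_sqrt h3
      rwa [show (1 : ℝ) / lam ^ 2 = (1 / lam) ^ 2 by field_simp,
        Real.sqrt_sq (by positivity)] at this
    have h6 : Real.sqrt (∑ k ∈ Finset.Ico m (n + 1), ‖φ k‖ ^ 2)
        ≤ Real.sqrt (∑' k, ‖φ (k + m)‖ ^ 2) := Real.sqrt_le_sqrt h4
    calc ‖∑ k ∈ Finset.Ico m (n + 1), ψn n k * φ k‖
        ≤ ∑ k ∈ Finset.Ico m (n + 1), ‖ψn n k‖ * ‖φ k‖ := h1
      _ ≤ Real.sqrt (∑ k ∈ Finset.Ico m (n + 1), ‖ψn n k‖ ^ 2) *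
            Real.sqrt (∑ k ∈ Finset.Ico m (n + 1), ‖φ k‖ ^ 2) := h2
      _ ≤ (1 / lam) * Real.sqrt (∑' k, ‖φ (k + m)‖ ^ 2) :=
          mul_le_mul h5 h6 (Real.sqrt_nonneg _) (by positivity)
  have keylim : ∀ m, n0 + 1 ≤ m →
      ‖(∑ k ∈ Finset.range m, ψ k * φ k) - δ‖
        ≤ (1 / lam) * Real.sqrt (∑' k, ‖φ (k + m)‖ ^ 2) := by
    intro m hm
    have ht : Tendsto (fun n => ‖(∑ k ∈ Finset.range m, ψn n k * φ k) - δ‖) atTop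
        (𝓝 ‖(∑ k ∈ Finset.range m, ψ k * φ k) - δ‖) := by
      refine Tendsto.norm (Tendsto.sub_const ?_ δ)
      exact tendsto_finset_sum _ fun k _ => (hten k).mul_const (φ k)
    exact le_of_tendsto ht (eventually_atTop.mpr ⟨m, fun n hn => key m hm n hn⟩)
  have htail : Tendsto (fun m => (1 / lam) * Real.sqrt (∑' k, ‖φ (k + m)‖ ^ 2)) atTop (𝓝 0) := by
    have h0 := (tendsto_sum_nat_add (fun k => ‖φ k‖ ^ 2)).sqrt
    rw [Real.sqrt_zero] at h0
    simpa using h0.const_mul (1 / lam)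
  have hzero : Tendsto (fun m => ‖(∑ k ∈ Finset.range m, ψ k * φ k) - δ‖) atTop (𝓝 0) := by
    refine squeeze_zero' (Eventually.of_forall fun m => norm_nonneg _) ?_ htail
    exact eventually_atTop.mpr ⟨n0 + 1, fun m hm => keylim m hm⟩
  rw [← tendsto_sub_nhds_zero_iff]
  exact tendsto_zero_iff_norm_tendsto_zero.mpr hzero

end Stmt5Aux

open Stmt5Aux

/-- for an HPD Toeplitz matrix `T = (c_{j-i})` with `lim λ_n > 0` and
`Σ |c_n|² < ∞`, the matrix `A = conj(B) Bᵗ` exists and `A T = T A = I`. -/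
theorem stmt5 (c : ℤ → ℂ) (B : ℕ → ℕ → ℂ)
    (hherm : ∀ k : ℤ, c (-k) = (starRingEnd ℂ) (c k))
    (hHPD : IsHPD (Toep c)) (hB : IsTransition (Toep c) B)
    (lam : ℝ) (hlam : Tendsto (smallestEig (Toep c)) atTop (𝓝 lam)) (hpos : 0 < lam)
    (hc : Summable fun n : ℕ => ‖c n‖ ^ 2) :
    (∀ i j : ℕ, Summable fun k => ‖(starRingEnd ℂ) (B i k) * B j k‖) ∧
    (∀ i j : ℕ, HasSum (fun k => (∑' l, (starRingEnd ℂ) (B i l) * B k l) * Toep c k j)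
      (if i = j then 1 else 0)) ∧
    (∀ i j : ℕ, HasSum (fun k => Toep c i k * (∑' l, (starRingEnd ℂ) (B k l) * B j l))
      (if i = j then 1 else 0)) := by
  obtain ⟨hB1, hB2, hB3⟩ := hB
  -- norm of c at negated argument
  have hcnorm : ∀ k : ℤ, ‖c (-k)‖ = ‖c k‖ := fun k => by rw [hherm, RCLike.norm_conj]
  -- diagonal partial sums are bounded
  have hdiag : ∀ i n, i ≤ n →
      ∑ l ∈ Finset.range (n + 1), Complex.normSq (B i l) ≤ 1 / lam := by
    intro i n hi
    have h := (bounds hHPD hlam hpos hB3 hi).2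
    rwa [diag_eq, Complex.ofReal_re] at h
  -- summability of ‖B i l‖²
  have hBsq : ∀ i, Summable fun l => ‖B i l‖ ^ 2 := by
    intro i
    refine summable_of_sum_range_le (c := 1 / lam) (fun l => sq_nonneg _) (fun m => ?_)
    have hsub : Finset.range m ⊆ Finset.range (max i m + 1) := by
      apply Finset.range_subset_range.mpr; omega
    calc ∑ l ∈ Finset.range m, ‖B i l‖ ^ 2
        ≤ ∑ l ∈ Finset.range (max i m + 1), ‖B i l‖ ^ 2 :=
          Finset.sum_le_sum_of_subset_of_nonneg hsub (fun _ _ _ => sq_nonneg _)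
      _ = ∑ l ∈ Finset.range (max i m + 1), Complex.normSq (B i l) :=
          Finset.sum_congr rfl fun l _ => by
            rw [Complex.normSq_eq_norm_sq]
      _ ≤ 1 / lam := hdiag i (max i m) (le_max_left _ _)
  -- first bullet
  have bullet1 : ∀ i j : ℕ, Summable fun k => ‖(starRingEnd ℂ) (B i k) * B j k‖ := by
    intro i j
    refine Summable.of_nonneg_of_le (fun k => norm_nonneg _) (fun k => ?_)
      (((hBsq i).add (hBsq j)).div_const 2)
    rw [norm_mul, RCLike.norm_conj]
    nlinarith [sq_nonneg (‖B i k‖ - ‖B j k‖), norm_nonneg (B i k), norm_nonneg (B j k)]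
  have hsummA : ∀ p q : ℕ, Summable fun l => (starRingEnd ℂ) (B p l) * B q l :=
    fun p q => .of_norm (bullet1 p q)
  have htendS : ∀ p q : ℕ, Tendsto (fun n => Ssum B n p q) atTop
      (𝓝 (∑' l, (starRingEnd ℂ) (B p l) * B q l)) := by
    intro p q
    have h := (hsummA p q).hasSum.tendsto_sum_nat
    exact h.comp (tendsto_add_atTop_nat 1)
  have hconjA : ∀ p q : ℕ, (∑' l, (starRingEnd ℂ) (B p l) * B q l)
      = (starRingEnd ℂ) (∑' l, (starRingEnd ℂ) (B q l) * B p l) := by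
    intro p q
    have h := (hsummA q p).hasSum.map (starRingEnd ℂ) Complex.continuous_conj
    have h2 : (fun l => (starRingEnd ℂ) (B p l) * B q l)
        = (starRingEnd ℂ) ∘ (fun l => (starRingEnd ℂ) (B q l) * B p l) := by
      funext l
      simp [Function.comp, _root_.map_mul, Complex.conj_conj, mul_comm]
    rw [h2]
    exact h.tsum_eq
  have hArow : ∀ p m, ∑ k ∈ Finset.range m,
      ‖∑' l, (starRingEnd ℂ) (B p l) * B k l‖ ^ 2 ≤ 1 / lam ^ 2 := by
    intro p m
    have ht : Tendsto (fun n => ∑ k ∈ Finset.range m, ‖Ssum B n p k‖ ^ 2) atTop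
        (𝓝 (∑ k ∈ Finset.range m, ‖∑' l, (starRingEnd ℂ) (B p l) * B k l‖ ^ 2)) :=
      tendsto_finset_sum _ fun k _ => ((htendS p k).norm).pow 2
    refine le_of_tendsto ht (eventually_atTop.mpr ⟨max p m, fun n hn => ?_⟩)
    have hsub : Finset.range m ⊆ Finset.range (n + 1) := by
      apply Finset.range_subset_range.mpr; omega
    calc ∑ k ∈ Finset.range m, ‖Ssum B n p k‖ ^ 2
        ≤ ∑ k ∈ Finset.range (n + 1), ‖Ssum B n p k‖ ^ 2 :=
          Finset.sum_le_sum_of_subset_of_nonneg hsub (fun _ _ _ => sq_nonneg _)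
      _ ≤ 1 / lam ^ 2 := (bounds hHPD hlam hpos hB3 (le_trans (le_max_left p m) hn)).1
  refine ⟨bullet1, fun i j => ?_, fun i j => ?_⟩
  · -- second bullet : A * T = 1
    refine main_conv hpos (fun k => Toep c k j)
      (fun k => ∑' l, (starRingEnd ℂ) (B i l) * B k l) (fun n k => Ssum B n i k)
      _ (max i j) (fun k => htendS i k) ?_ ?_ ?_ (hArow i)
    · intro n hn
      exact inv_left hB3 (le_trans (le_max_left i j) hn) (le_trans (le_max_right i j) hn)
    · intro n hn
      exact (bounds hHPD hlam hpos hB3 (le_trans (le_max_left i j) hn)).1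
    · -- Summable fun k => ‖Toep c k j‖²
      refine (summable_nat_add_iff j).mp ?_
      refine hc.congr fun k => ?_
      show ‖c (k : ℤ)‖ ^ 2 = ‖c ((j : ℤ) - ((k + j : ℕ) : ℤ))‖ ^ 2
      rw [show ((j : ℤ) - ((k + j : ℕ) : ℤ)) = -(k : ℤ) by push_cast; ring, hcnorm]
  · -- third bullet : T * A = 1
    have hmain : HasSum (fun k => (∑' l, (starRingEnd ℂ) (B k l) * B j l) * Toep c i k)
        (if i = j then 1 else 0) := by
      refine main_conv hpos (fun k => Toep c i k)
        (fun k => ∑' l, (starRingEnd ℂ) (B k l) * B j l) (fun n k => Ssum B n k j)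
        _ (max i j) (fun k => htendS k j) ?_ ?_ ?_ ?_
      · intro n hn
        have h := inv_right hB3 (le_trans (le_max_left i j) hn)
          (le_trans (le_max_right i j) hn)
        rw [← h]
        exact Finset.sum_congr rfl fun k _ => mul_comm _ _
      · intro n hn
        exact col_bound hHPD hlam hpos hB3 (le_trans (le_max_right i j) hn)
      · -- Summable fun k => ‖Toep c i k‖²
        refine (summable_nat_add_iff i).mp ?_
        refine hc.congr fun k => ?_
        show ‖c (k : ℤ)‖ ^ 2 = ‖c (((k + i : ℕ) : ℤ) - (i : ℤ))‖ ^ 2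
        rw [show (((k + i : ℕ) : ℤ) - (i : ℤ)) = (k : ℤ) by push_cast; ring]
      · -- column ℓ² bound for A
        intro m
        refine le_trans (le_of_eq ?_) (hArow j m)
        refine Finset.sum_congr rfl fun k _ => ?_
        show ‖∑' l, (starRingEnd ℂ) (B k l) * B j l‖ ^ 2
          = ‖∑' l, (starRingEnd ℂ) (B j l) * B k l‖ ^ 2
        rw [hconjA k j, RCLike.norm_conj]
    have heq : (fun k => Toep c i k * (∑' l, (starRingEnd ℂ) (B k l) * B j l))
        = fun k => (∑' l, (starRingEnd ℂ) (B k l) * B j l) * Toep c i k :=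
      funext fun k => mul_comm _ _
    rw [heq]
    exact hmain
end
end

section
/- Let T be an infinite Hermitian positive definite Toeplitz matrix with transition matrix B = (b_{k,n}), and assume the matrix A = conj(B) B^t exists (i.e. every row of B lies in ℓ²). Then B is a weakly asymptotic Toeplitz matrix: for every k ∈ ℕ the limit β_k = lim_{n→∞} b_{n-k,n} exists; moreover β_0 = √(a_{0,0}) > 0, where a_{0,0} = Σ_{k≥0} |b_{0,k}|². -/
open MeasureTheory Filter Matrix
open scoped ComplexOrder Topology

noncomputable section

theorem key (c : ℤ → ℂ) (B : ℕ → ℕ → ℂ)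
    (hherm : ∀ k : ℤ, c (-k) = (starRingEnd ℂ) (c k))
    (hB : IsTransition (Toep c) B) {k n : ℕ} (hk : k ≤ n) :
    (starRingEnd ℂ) (B (n - k) n) * B n n
      = ∑ m : Fin (n + 1), B k m * (starRingEnd ℂ) (B 0 m) := by
  set Tn := trunc (Toep c) n with hTn
  set Bn := trunc B n with hBn
  set C := Bn.map (starRingEnd ℂ) with hC
  have h1 : Bnᵀ * Tn * C = 1 := hB.2.2 n
  set M := C * Bnᵀ with hM
  have hMT : M * Tn = 1 := by
    rw [hM, Matrix.mul_assoc]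
    exact mul_eq_one_comm.mp h1
  have hTM : Tn * M = 1 := mul_eq_one_comm.mp hMT
  have hTherm : Tnᴴ = Tn := by
    ext i j
    simp only [Matrix.conjTranspose_apply, hTn, trunc, Toep, Matrix.of_apply]
    rw [show ((j:ℤ) - (i:ℤ)) = -((i:ℤ) - (j:ℤ)) by ring, hherm]
    rfl
  have hMherm : Mᴴ = M := by
    have h2 : Mᴴ * Tn = 1 := by
      calc Mᴴ * Tn = Mᴴ * Tnᴴ := by rw [hTherm]
        _ = (Tn * M)ᴴ := (Matrix.conjTranspose_mul Tn M).symm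
        _ = 1 := by rw [hTM, Matrix.conjTranspose_one]
    calc Mᴴ = Mᴴ * (Tn * M) := by rw [hTM, Matrix.mul_one]
      _ = (Mᴴ * Tn) * M := by rw [Matrix.mul_assoc]
      _ = M := by rw [h2, Matrix.one_mul]
  have hTrev : Tn.submatrix Fin.rev Fin.rev = Tnᵀ := by
    ext i j
    simp only [Matrix.submatrix_apply, Matrix.transpose_apply, hTn, trunc, Toep, Matrix.of_apply]
    congr 1
    have hi := i.isLt
    have hj := j.isLt
    simp only [Fin.val_rev]
    omega
  have hMrev : M.submatrix Fin.rev Fin.rev = Mᵀ := by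
    have h3 : M.submatrix Fin.rev Fin.rev * Tnᵀ = 1 := by
      rw [← hTrev]
      have hone : ((1 : Matrix (Fin (n+1)) (Fin (n+1)) ℂ)).submatrix Fin.rev Fin.rev = 1 := by
        ext i j
        simp [Matrix.one_apply, Fin.rev_inj]
      have hcoe : ⇑(Fin.revPerm : Equiv.Perm (Fin (n+1))) = (Fin.rev : Fin (n+1) → Fin (n+1)) :=
        funext fun i => Fin.revPerm_apply i
      have heq := Matrix.submatrix_mul_equiv M Tn Fin.rev (Fin.revPerm : Equiv.Perm (Fin (n+1))) Fin.rev
      rw [hcoe, hMT, hone] at heq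
      exact heq
    have h4 : Tnᵀ * Mᵀ = 1 := by
      rw [← Matrix.transpose_mul, hMT, Matrix.transpose_one]
    calc M.submatrix Fin.rev Fin.rev
        = M.submatrix Fin.rev Fin.rev * (Tnᵀ * Mᵀ) := by rw [h4, Matrix.mul_one]
      _ = (M.submatrix Fin.rev Fin.rev * Tnᵀ) * Mᵀ := by rw [Matrix.mul_assoc]
      _ = Mᵀ := by rw [h3, Matrix.one_mul]
  have hkl : k < n + 1 := by omega
  set i0 : Fin (n+1) := ⟨k, hkl⟩
  set j0 : Fin (n+1) := ⟨0, Nat.succ_pos n⟩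
  have e1 : M i0.rev j0.rev = M j0 i0 := by
    have := congrFun (congrFun hMrev i0) j0
    simpa [Matrix.submatrix_apply, Matrix.transpose_apply] using this
  have e2 : M j0 i0 = (starRingEnd ℂ) (M i0 j0) := by
    have := congrFun (congrFun hMherm j0) i0
    simpa [Matrix.conjTranspose_apply] using this.symm
  -- entries of M
  have hMent : ∀ (a b : Fin (n+1)), M a b = ∑ m : Fin (n+1),
      (starRingEnd ℂ) (B a m) * B b m := by
    intro a b
    simp [hM, Matrix.mul_apply, hC, hBn, trunc, Matrix.map_apply]
  have hrevval : (i0.rev : ℕ) = n - k := by simp [Fin.val_rev, i0]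
  have hrevval0 : (j0.rev : ℕ) = n := by simp [Fin.val_rev, j0]
  have hL : M i0.rev j0.rev = (starRingEnd ℂ) (B (n - k) n) * B n n := by
    rw [hMent]
    rw [Finset.sum_eq_single_of_mem (Fin.last n) (Finset.mem_univ _) ?side]
    · rw [hrevval, hrevval0, Fin.val_last]
    · intro m _ hm
      have hmlt : (m : ℕ) < n := by
        have := m.isLt
        have : (m : ℕ) ≠ n := fun h => hm (Fin.ext (by simp [h, Fin.val_last]))
        omega
      rw [hrevval0, hB.1 n m hmlt, mul_zero]
  have hR : (starRingEnd ℂ) (M i0 j0) = ∑ m : Fin (n + 1), B k m * (starRingEnd ℂ) (B 0 m) := by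
    rw [hMent]
    rw [map_sum]
    refine Finset.sum_congr rfl fun m _ => ?_
    show (starRingEnd ℂ) ((starRingEnd ℂ) (B (i0 : ℕ) m) * B (j0 : ℕ) m) = _
    rw [RingHom.map_mul, Complex.conj_conj]
  rw [← hL, e1, e2, hR]

lemma summ (B : ℕ → ℕ → ℂ) (hrows : ∀ i : ℕ, Summable fun k => ‖B i k‖ ^ 2) (k : ℕ) :
    Summable fun m => B k m * (starRingEnd ℂ) (B 0 m) := by
  apply Summable.of_norm
  refine Summable.of_nonneg_of_le (fun m => norm_nonneg _) (fun m => ?_)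
    ((hrows k).add (hrows 0))
  have h1 : ‖B k m * (starRingEnd ℂ) (B 0 m)‖ = ‖B k m‖ * ‖B 0 m‖ := by
    rw [norm_mul]
    congr 1
    exact norm_star _
  rw [h1]
  nlinarith [norm_nonneg (B k m), norm_nonneg (B 0 m), sq_nonneg (‖B k m‖ - ‖B 0 m‖)]


/-- if `T` is an HPD Toeplitz matrix whose transition matrix `B` has all
rows in `ℓ²` (so that `A = conj(B) Bᵗ` exists), then `B` is weakly asymptotic
Toeplitz: all limits `β_k = lim_n b_{n-k,n}` exist; moreover
`β_0 = √(a_{0,0}) > 0` with `a_{0,0} = Σ_k |b_{0,k}|²`. -/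
theorem stmt7 (c : ℤ → ℂ) (B : ℕ → ℕ → ℂ)
    (hherm : ∀ k : ℤ, c (-k) = (starRingEnd ℂ) (c k))
    (hHPD : IsHPD (Toep c)) (hB : IsTransition (Toep c) B)
    (hrows : ∀ i : ℕ, Summable fun k => ‖B i k‖ ^ 2) :
    (∀ k : ℕ, ∃ β : ℂ, Tendsto (fun n => B (n - k) n) atTop (𝓝 β)) ∧
    (Tendsto (fun n => B n n) atTop (𝓝 ((Real.sqrt (∑' k, ‖B 0 k‖ ^ 2) : ℝ) : ℂ)) ∧
      0 < Real.sqrt (∑' k, ‖B 0 k‖ ^ 2)) := by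
  have hconj : ∀ n, (starRingEnd ℂ) (B n n) = B n n := fun n =>
    Complex.conj_eq_iff_im.mpr (hB.2.1 n).2
  have hBnn0 : ∀ n, B n n ≠ 0 := by
    intro n h
    have h2 := (hB.2.1 n).1
    rw [h] at h2
    simp at h2
  set t := ∑' m : ℕ, ‖B 0 m‖ ^ 2 with ht_def
  -- diagonal formula
  have hdiag : ∀ n : ℕ, B n n
      = ((Real.sqrt (∑ m ∈ Finset.range (n+1), ‖B 0 m‖ ^ 2) : ℝ) : ℂ) := by
    intro n
    have hkey := key c B hherm hB (Nat.zero_le n)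
    rw [Nat.sub_zero] at hkey
    have hR : (∑ m : Fin (n + 1), B 0 m * (starRingEnd ℂ) (B 0 m))
        = ((∑ m ∈ Finset.range (n+1), ‖B 0 m‖ ^ 2 : ℝ) : ℂ) := by
      rw [← Fin.sum_univ_eq_sum_range (fun m => ‖B 0 m‖ ^ 2) (n+1)]
      push_cast
      refine Finset.sum_congr rfl fun m _ => ?_
      rw [Complex.mul_conj]
      norm_cast
      rw [← Complex.sq_norm]
    set r := (B n n).re with hr
    have hre : B n n = (r : ℂ) := Complex.ext rfl (by simp [(hB.2.1 n).2])
    rw [hre, hR] at hkey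
    have hkey2 : r * r = ∑ m ∈ Finset.range (n+1), ‖B 0 m‖ ^ 2 := by
      have := hkey
      rw [Complex.conj_ofReal] at this
      exact_mod_cast this
    have hrpos : 0 < r := (hB.2.1 n).1
    have : Real.sqrt (∑ m ∈ Finset.range (n+1), ‖B 0 m‖ ^ 2) = r := by
      rw [← hkey2, Real.sqrt_mul_self hrpos.le]
    rw [this, ← hre]
  -- convergence of real partial sums
  have hpsr : Tendsto (fun n => ∑ m ∈ Finset.range (n+1), ‖B 0 m‖ ^ 2) atTop (𝓝 t) := by
    have h1 := (hrows 0).hasSum.tendsto_sum_nat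
    exact h1.comp (tendsto_add_atTop_nat 1)
  have hB00 : 0 < ‖B 0 0‖ ^ 2 := by
    exact pow_pos (norm_pos_iff.mpr (hBnn0 0)) 2
  have ht : 0 < t := lt_of_lt_of_le hB00 (Summable.le_tsum (hrows 0) 0 fun m _ => by positivity)
  have hsq : 0 < Real.sqrt t := Real.sqrt_pos.mpr ht
  have hLne : ((Real.sqrt t : ℝ) : ℂ) ≠ 0 := Complex.ofReal_ne_zero.mpr hsq.ne'
  have hdiagT : Tendsto (fun n => B n n) atTop (𝓝 ((Real.sqrt t : ℝ) : ℂ)) := by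
    have h1 : Tendsto
        (fun n => ((Real.sqrt (∑ m ∈ Finset.range (n+1), ‖B 0 m‖ ^ 2) : ℝ) : ℂ)) atTop
        (𝓝 ((Real.sqrt t : ℝ) : ℂ)) :=
      (Complex.continuous_ofReal.tendsto _).comp ((Real.continuous_sqrt.tendsto _).comp hpsr)
    exact h1.congr fun n => (hdiag n).symm
  have hps : ∀ k : ℕ, Tendsto
      (fun n => ∑ m : Fin (n+1), B k m * (starRingEnd ℂ) (B 0 m)) atTop
      (𝓝 (∑' m : ℕ, B k m * (starRingEnd ℂ) (B 0 m))) := by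
    intro k
    have h1 := (summ B hrows k).hasSum.tendsto_sum_nat
    have h2 := h1.comp (tendsto_add_atTop_nat 1)
    refine h2.congr fun n => ?_
    exact (Fin.sum_univ_eq_sum_range (fun m => B k m * (starRingEnd ℂ) (B 0 m)) (n+1)).symm
  refine ⟨?_, hdiagT, hsq⟩
  intro k
  refine ⟨(starRingEnd ℂ) (∑' m : ℕ, B k m * (starRingEnd ℂ) (B 0 m))
    / ((Real.sqrt t : ℝ) : ℂ), ?_⟩
  have hconjcont : Continuous fun z : ℂ => (starRingEnd ℂ) z := continuous_star
  have h1 : Tendsto (fun n =>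
      (starRingEnd ℂ) (∑ m : Fin (n+1), B k m * (starRingEnd ℂ) (B 0 m)) / B n n) atTop
      (𝓝 ((starRingEnd ℂ) (∑' m : ℕ, B k m * (starRingEnd ℂ) (B 0 m))
        / ((Real.sqrt t : ℝ) : ℂ))) :=
    ((hconjcont.tendsto _).comp (hps k)).div hdiagT hLne
  refine h1.congr' ?_
  filter_upwards [eventually_ge_atTop k] with n hn
  have hkey := key c B hherm hB hn
  have h2 : B (n - k) n * B n n
      = (starRingEnd ℂ) (∑ m : Fin (n+1), B k m * (starRingEnd ℂ) (B 0 m)) := by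
    have h3 := congrArg (starRingEnd ℂ) hkey
    rw [RingHom.map_mul, Complex.conj_conj, hconj n] at h3
    exact h3
  rw [div_eq_iff (hBnn0 n)]
  exact h2.symm
end
end

section
/- Let ν be a positive measure on the unit circle 𝕋 with infinite support, let P_n(z) = Σ_{k=0}^n b_{k,n}(ν) z^k be its orthonormal polynomials (with b_{n,n}(ν) > 0), and let λ_n(ν) be the smallest eigenvalue of the truncated moment matrix T_n(ν). If lim_{n→∞} λ_n(ν) > 0, then for every k ∈ ℕ the limit lim_{n→∞} b_{n-k,n}(ν) exists. -/
open MeasureTheory Filter Matrix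
open scoped ComplexOrder Topology

noncomputable section

/-- The moment matrix of a measure on `ℂ`. -/
def momMat (ν : Measure ℂ) : ℕ → ℕ → ℂ :=
  fun i j => ∫ z, z ^ i * (starRingEnd ℂ) z ^ j ∂ν


namespace Stmt10Aux

set_option linter.unusedSectionVars false

open Complex in
lemma conj_eq_inv {z : ℂ} (hz : ‖z‖ = 1) : (starRingEnd ℂ) z = z⁻¹ := by
  have h1 : z * (starRingEnd ℂ) z = 1 := by
    rw [Complex.mul_conj]
    norm_cast
    rw [Complex.normSq_eq_norm_sq, hz]; norm_num
  exact eq_inv_of_mul_eq_one_right h1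

variable {ν : Measure ℂ} [IsFiniteMeasure ν]

lemma ae_norm (hsupp : ν {z : ℂ | ‖z‖ ≠ 1} = 0) : ∀ᵐ z ∂ν, ‖z‖ = 1 := by
  rw [ae_iff]; exact hsupp

lemma integrable_mom (hs : ∀ᵐ z ∂ν, ‖z‖ = 1) (i j : ℕ) :
    Integrable (fun z => z ^ i * (starRingEnd ℂ) z ^ j) ν := by
  refine Integrable.mono' (integrable_const 1) ?_ ?_
  · exact (Continuous.mul (continuous_pow i)
      ((Complex.continuous_conj).pow j)).aestronglyMeasurable
  · filter_upwards [hs] with z hz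
    simp [norm_mul, norm_pow, hz]

lemma mom_herm (i j : ℕ) : (starRingEnd ℂ) (momMat ν i j) = momMat ν j i := by
  rw [momMat, momMat, ← integral_conj]
  congr 1; funext z
  simp [mul_comm, ← map_pow]

lemma mom_shift (hs : ∀ᵐ z ∂ν, ‖z‖ = 1) {a b c d : ℕ} (h : a + d = b + c) :
    momMat ν a b = momMat ν c d := by
  refine integral_congr_ae ?_
  filter_upwards [hs] with z hz
  have hz0 : z ≠ 0 := by intro h0; simp [h0] at hz
  rw [conj_eq_inv hz, inv_pow, inv_pow]
  field_simp
  rw [← pow_add, ← pow_add, h, add_comm]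

/-- The sesquilinear moment form on coefficient vectors. -/
def Q (ν : Measure ℂ) (N : ℕ) (x y : ℕ → ℂ) : ℂ :=
  ∑ i ∈ Finset.range (N + 1), ∑ j ∈ Finset.range (N + 1),
    x i * (starRingEnd ℂ) (y j) * momMat ν i j

lemma Qext {x y : ℕ → ℂ} {n N : ℕ} (hx : ∀ i, n < i → x i = 0)
    (hy : ∀ j, n < j → y j = 0) (h : n ≤ N) : Q ν N x y = Q ν n x y := by
  unfold Q
  rw [← Finset.sum_subset (Finset.range_subset_range.2 (by omega) :
      Finset.range (n+1) ⊆ Finset.range (N+1))]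
  · refine Finset.sum_congr rfl fun i hi => ?_
    rw [← Finset.sum_subset (Finset.range_subset_range.2 (by omega) :
        Finset.range (n+1) ⊆ Finset.range (N+1))]
    intro j _ hj
    rw [hy j (by simpa using hj)]
    simp
  · intro i _ hi
    rw [hx i (by simpa using hi)]
    simp

lemma Qherm (N : ℕ) (x y : ℕ → ℂ) : (starRingEnd ℂ) (Q ν N x y) = Q ν N y x := by
  unfold Q
  rw [map_sum, Finset.sum_comm]
  refine Finset.sum_congr rfl fun j _ => ?_
  rw [map_sum]
  refine Finset.sum_congr rfl fun i _ => ?_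
  simp only [_root_.map_mul, RingHomCompTriple.comp_apply, RingHom.id_apply,
    Complex.conj_conj, mom_herm]
  ring

lemma Qsmul1 (N : ℕ) (s : ℂ) (x y : ℕ → ℂ) :
    Q ν N (fun i => s * x i) y = s * Q ν N x y := by
  unfold Q
  rw [Finset.mul_sum]
  refine Finset.sum_congr rfl fun i _ => ?_
  rw [Finset.mul_sum]
  refine Finset.sum_congr rfl fun j _ => ?_
  ring

lemma Qsmul2 (N : ℕ) (s : ℂ) (x y : ℕ → ℂ) :
    Q ν N x (fun j => s * y j) = (starRingEnd ℂ) s * Q ν N x y := by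
  unfold Q
  rw [Finset.mul_sum]
  refine Finset.sum_congr rfl fun i _ => ?_
  rw [Finset.mul_sum]
  refine Finset.sum_congr rfl fun j _ => ?_
  simp only [_root_.map_mul]
  ring

lemma Qadd1 (N : ℕ) (x x' y : ℕ → ℂ) :
    Q ν N (fun i => x i + x' i) y = Q ν N x y + Q ν N x' y := by
  unfold Q
  rw [← Finset.sum_add_distrib]
  refine Finset.sum_congr rfl fun i _ => ?_
  rw [← Finset.sum_add_distrib]
  refine Finset.sum_congr rfl fun j _ => ?_
  ring

lemma Qadd2 (N : ℕ) (x y y' : ℕ → ℂ) :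
    Q ν N x (fun j => y j + y' j) = Q ν N x y + Q ν N x y' := by
  unfold Q
  rw [← Finset.sum_add_distrib]
  refine Finset.sum_congr rfl fun i _ => ?_
  rw [← Finset.sum_add_distrib]
  refine Finset.sum_congr rfl fun j _ => ?_
  simp only [map_add]
  ring


/-- Expansion of the orthonormality integral into moment sums. -/
lemma hortho_sum (hs : ∀ᵐ z ∂ν, ‖z‖ = 1) {B : ℕ → ℕ → ℂ}
    (hortho : ∀ n m : ℕ,
      ∫ z, (∑ k ∈ Finset.range (n + 1), B k n * z ^ k) *
        (starRingEnd ℂ) (∑ k ∈ Finset.range (m + 1), B k m * z ^ k) ∂ν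
          = if n = m then 1 else 0) (n m : ℕ) :
    ∑ i ∈ Finset.range (n + 1), ∑ j ∈ Finset.range (m + 1),
      B i n * (starRingEnd ℂ) (B j m) * momMat ν i j = if n = m then 1 else 0 := by
  rw [← hortho n m]
  have hptw : ∀ z : ℂ,
      (∑ k ∈ Finset.range (n + 1), B k n * z ^ k) *
        (starRingEnd ℂ) (∑ k ∈ Finset.range (m + 1), B k m * z ^ k)
      = ∑ i ∈ Finset.range (n + 1), ∑ j ∈ Finset.range (m + 1),
          B i n * (starRingEnd ℂ) (B j m) * (z ^ i * (starRingEnd ℂ) z ^ j) := by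
    intro z
    rw [map_sum, Finset.sum_mul_sum]
    refine Finset.sum_congr rfl fun i _ => Finset.sum_congr rfl fun j _ => ?_
    simp only [_root_.map_mul, map_pow]
    ring
  rw [MeasureTheory.integral_congr_ae (Eventually.of_forall hptw)]
  rw [MeasureTheory.integral_finset_sum _ (fun i _ => integrable_finset_sum _
    (fun j _ => ((integrable_mom hs i j).const_mul _)))]
  refine Finset.sum_congr rfl fun i _ => ?_
  rw [MeasureTheory.integral_finset_sum _ (fun j _ => (integrable_mom hs i j).const_mul _)]
  refine Finset.sum_congr rfl fun j _ => ?_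
  rw [integral_const_mul]
  rfl


section Olem
variable {B : ℕ → ℕ → ℂ}
  (hS : ∀ n m : ℕ, ∑ i ∈ Finset.range (n + 1), ∑ j ∈ Finset.range (m + 1),
      B i n * (starRingEnd ℂ) (B j m) * momMat ν i j = if n = m then 1 else 0)
  (hdiag : ∀ n : ℕ, 0 < (B n n).re ∧ (B n n).im = 0)

include hS hdiag in
/-- Orthogonality of the `n`-th orthonormal polynomial to lower monomials. -/
lemma Olem : ∀ j n : ℕ, j < n → ∑ k ∈ Finset.range (n + 1), B k n * momMat ν k j = 0 := by
  intro j
  induction j using Nat.strong_induction_on with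
  | _ j IH =>
    intro n hjn
    have hBj : (B j j : ℂ) ≠ 0 := by
      intro h0
      have := (hdiag j).1
      rw [h0] at this
      simp at this
    have key := hS n j
    rw [if_neg (by omega)] at key
    rw [Finset.sum_comm] at key
    have key2 : ∑ l ∈ Finset.range (j + 1), (starRingEnd ℂ) (B l j) *
        ∑ k ∈ Finset.range (n + 1), B k n * momMat ν k l = 0 := by
      rw [← key]
      refine Finset.sum_congr rfl fun l _ => ?_
      rw [Finset.mul_sum]
      refine Finset.sum_congr rfl fun k _ => ?_
      ring
    rw [Finset.sum_range_succ] at key2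
    have hzero : ∀ l ∈ Finset.range j, (starRingEnd ℂ) (B l j) *
        ∑ k ∈ Finset.range (n + 1), B k n * momMat ν k l = 0 := by
      intro l hl
      have hlj := Finset.mem_range.1 hl
      rw [IH l hlj n (by omega), mul_zero]
    rw [Finset.sum_eq_zero hzero, zero_add] at key2
    have hconj : (starRingEnd ℂ) (B j j) ≠ 0 := by
      simpa using hBj
    exact (mul_eq_zero.1 key2).resolve_left hconj

include hS hdiag in
/-- Star-polynomial orthogonality: `⟨φ*_N, z^j⟩ = 0` for `1 ≤ j ≤ N`. -/
lemma starOrth (hs : ∀ᵐ z ∂ν, ‖z‖ = 1) (N j : ℕ) (hj1 : 1 ≤ j) (hjN : j ≤ N) :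
    ∑ i ∈ Finset.range (N + 1), (starRingEnd ℂ) (B (N - i) N) * momMat ν i j = 0 := by
  have hrefl := Finset.sum_range_reflect
    (fun i => (starRingEnd ℂ) (B i N) * momMat ν (N - i) j) (N + 1)
  simp only [Nat.add_sub_cancel] at hrefl
  have step1 : ∑ i ∈ Finset.range (N + 1), (starRingEnd ℂ) (B (N - i) N) * momMat ν i j
      = ∑ i ∈ Finset.range (N + 1), (starRingEnd ℂ) (B i N) * momMat ν (N - i) j := by
    rw [← hrefl]
    refine Finset.sum_congr rfl fun i hi => ?_
    have hi' : i ≤ N := by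
      have := Finset.mem_range.1 hi
      omega
    rw [Nat.sub_sub_self hi']
  rw [step1]
  have step2 : ∑ i ∈ Finset.range (N + 1), (starRingEnd ℂ) (B i N) * momMat ν (N - i) j
      = (starRingEnd ℂ) (∑ i ∈ Finset.range (N + 1), B i N * momMat ν i (N - j)) := by
    rw [map_sum]
    refine Finset.sum_congr rfl fun i hi => ?_
    have hi' : i ≤ N := by
      have := Finset.mem_range.1 hi
      omega
    rw [_root_.map_mul, mom_herm, mom_shift hs (show (N - i) + i = j + (N - j) by omega)]
  rw [step2, Olem hS hdiag (N - j) N (by omega), map_zero]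

end Olem

section starNorm
variable {B : ℕ → ℕ → ℂ}
  (hS : ∀ n m : ℕ, ∑ i ∈ Finset.range (n + 1), ∑ j ∈ Finset.range (m + 1),
      B i n * (starRingEnd ℂ) (B j m) * momMat ν i j = if n = m then 1 else 0)

include hS in
lemma starNorm (hs : ∀ᵐ z ∂ν, ‖z‖ = 1) (N : ℕ) :
    ∑ i ∈ Finset.range (N + 1), ∑ j ∈ Finset.range (N + 1),
      (starRingEnd ℂ) (B (N - i) N) * B (N - j) N * momMat ν i j = 1 := by
  have h1 : ∑ i ∈ Finset.range (N + 1), ∑ j ∈ Finset.range (N + 1),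
      (starRingEnd ℂ) (B (N - i) N) * B (N - j) N * momMat ν i j
      = ∑ i ∈ Finset.range (N + 1), ∑ j ∈ Finset.range (N + 1),
      (starRingEnd ℂ) (B i N) * B j N * momMat ν (N - i) (N - j) := by
    rw [← Finset.sum_range_reflect]
    refine Finset.sum_congr rfl fun i hi => ?_
    have hi' : i ≤ N := by have := Finset.mem_range.1 hi; omega
    rw [← Finset.sum_range_reflect]
    refine Finset.sum_congr rfl fun j hj => ?_
    have hj' : j ≤ N := by have := Finset.mem_range.1 hj; omega
    simp only [Nat.add_sub_cancel]
    rw [Nat.sub_sub_self hi', Nat.sub_sub_self hj']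
  have hSNN : ∑ i ∈ Finset.range (N + 1), ∑ j ∈ Finset.range (N + 1),
      B i N * (starRingEnd ℂ) (B j N) * momMat ν i j = 1 := by
    have := hS N N
    rwa [if_pos rfl] at this
  rw [h1, ← hSNN, Finset.sum_comm]
  refine Finset.sum_congr rfl fun i hi => Finset.sum_congr rfl fun j hj => ?_
  have hi' : i ≤ N := by have := Finset.mem_range.1 hi; omega
  have hj' : j ≤ N := by have := Finset.mem_range.1 hj; omega
  rw [mom_shift hs (show (N - j) + j = (N - i) + i by omega)]
  ring

end starNorm

lemma quad_eq_integral (hs : ∀ᵐ z ∂ν, ‖z‖ = 1) (N : ℕ) (w : Fin (N + 1) → ℂ) :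
    (∑ i : Fin (N + 1), ∑ j : Fin (N + 1), w i * momMat ν i j * (starRingEnd ℂ) (w j))
      = ((∫ z, Complex.normSq (∑ i : Fin (N + 1), w i * z ^ (i : ℕ)) ∂ν : ℝ) : ℂ) := by
  have h2 : ∫ z, ((Complex.normSq (∑ i : Fin (N + 1), w i * z ^ (i : ℕ)) : ℝ) : ℂ) ∂ν
      = ((∫ z, Complex.normSq (∑ i : Fin (N + 1), w i * z ^ (i : ℕ)) ∂ν : ℝ) : ℂ) :=
    integral_ofReal
  rw [← h2]
  have hptw : ∀ z : ℂ, ((Complex.normSq (∑ i : Fin (N + 1), w i * z ^ (i : ℕ)) : ℝ) : ℂ)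
      = ∑ i : Fin (N + 1), ∑ j : Fin (N + 1),
          w i * (starRingEnd ℂ) (w j) * (z ^ (i : ℕ) * (starRingEnd ℂ) z ^ (j : ℕ)) := by
    intro z
    rw [← Complex.mul_conj, map_sum, Finset.sum_mul_sum]
    refine Finset.sum_congr rfl fun i _ => Finset.sum_congr rfl fun j _ => ?_
    simp only [_root_.map_mul, map_pow]
    ring
  rw [MeasureTheory.integral_congr_ae (Eventually.of_forall hptw),
    MeasureTheory.integral_finset_sum _ (fun (i : Fin (N + 1)) _ => integrable_finset_sum _
      (fun (j : Fin (N + 1)) _ => ((integrable_mom hs (i : ℕ) (j : ℕ)).const_mul _)))]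
  refine Finset.sum_congr rfl fun i _ => ?_
  rw [MeasureTheory.integral_finset_sum _ (fun (j : Fin (N + 1)) _ => (integrable_mom hs (i : ℕ) (j : ℕ)).const_mul _)]
  refine Finset.sum_congr rfl fun j _ => ?_
  rw [integral_const_mul]
  unfold momMat
  ring

lemma quad_re_nonneg (hs : ∀ᵐ z ∂ν, ‖z‖ = 1) (N : ℕ) (w : Fin (N + 1) → ℂ) :
    0 ≤ (∑ i : Fin (N + 1), ∑ j : Fin (N + 1),
      w i * momMat ν i j * (starRingEnd ℂ) (w j)).re := by
  rw [quad_eq_integral hs, Complex.ofReal_re]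
  exact integral_nonneg fun z => Complex.normSq_nonneg _

lemma eig_bddBelow (hs : ∀ᵐ z ∂ν, ‖z‖ = 1) (N : ℕ) :
    BddBelow (Set.range fun v : {v : Fin (N + 1) → ℂ // v ≠ 0} =>
      (∑ i : Fin (N + 1), ∑ j : Fin (N + 1), v.1 i * momMat ν i j * (starRingEnd ℂ) (v.1 j)).re
        / ∑ i, Complex.normSq (v.1 i)) := by
  refine ⟨0, fun x hx => ?_⟩
  obtain ⟨v, rfl⟩ := hx
  exact div_nonneg (quad_re_nonneg hs N v.1)
    (Finset.sum_nonneg fun i _ => Complex.normSq_nonneg _)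

lemma eig_antitone (hs : ∀ᵐ z ∂ν, ‖z‖ = 1) : Antitone (smallestEig (momMat ν)) := by
  refine antitone_nat_of_succ_le fun N => ?_
  haveI : Nonempty {v : Fin (N + 1) → ℂ // v ≠ 0} :=
    ⟨⟨fun _ => 1, by intro h; simpa using congrFun h 0⟩⟩
  refine le_ciInf fun v => ?_
  set w' : Fin (N + 2) → ℂ := Fin.snoc v.1 0 with hw'def
  have hw' : w' ≠ 0 := by
    intro h
    apply v.2
    funext i
    have := congrFun h i.castSucc
    simpa [hw'def, Fin.snoc_castSucc] using this
  refine le_trans (ciInf_le (eig_bddBelow hs (N + 1)) ⟨w', hw'⟩) (le_of_eq ?_)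
  congr 1
  · congr 1
    rw [Fin.sum_univ_castSucc]
    simp only [hw'def, Fin.snoc_last, Fin.snoc_castSucc, zero_mul, Finset.sum_const_zero,
      Fin.sum_univ_castSucc, mul_zero, map_zero, add_zero, Fin.coe_castSucc]
  · rw [Fin.sum_univ_castSucc]
    simp [hw'def, Fin.snoc_castSucc]


lemma lam_le_eig (hs : ∀ᵐ z ∂ν, ‖z‖ = 1) {lam : ℝ}
    (hlam : Tendsto (smallestEig (momMat ν)) atTop (𝓝 lam)) (N : ℕ) :
    lam ≤ smallestEig (momMat ν) N :=
  le_of_tendsto hlam (eventually_atTop.2 ⟨N, fun _ hm => eig_antitone hs hm⟩)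

lemma KIfin (hs : ∀ᵐ z ∂ν, ‖z‖ = 1) {lam : ℝ}
    (hlam : Tendsto (smallestEig (momMat ν)) atTop (𝓝 lam)) (N : ℕ) (w : Fin (N + 1) → ℂ) :
    lam * ∑ i, Complex.normSq (w i)
      ≤ (∑ i : Fin (N + 1), ∑ j : Fin (N + 1),
          w i * momMat ν i j * (starRingEnd ℂ) (w j)).re := by
  by_cases hw : w = 0
  · simp [hw]
  · have hden : 0 < ∑ i, Complex.normSq (w i) := by
      obtain ⟨i, hi⟩ := Function.ne_iff.1 hw
      exact Finset.sum_pos' (fun i _ => Complex.normSq_nonneg _)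
        ⟨i, Finset.mem_univ i, by simpa [Complex.normSq_pos] using hi⟩
    have h1 : lam ≤ (∑ i : Fin (N + 1), ∑ j : Fin (N + 1),
        w i * momMat ν i j * (starRingEnd ℂ) (w j)).re / ∑ i, Complex.normSq (w i) :=
      le_trans (lam_le_eig hs hlam N) (ciInf_le (eig_bddBelow hs N) ⟨w, hw⟩)
    calc lam * ∑ i, Complex.normSq (w i)
        ≤ ((∑ i : Fin (N + 1), ∑ j : Fin (N + 1),
            w i * momMat ν i j * (starRingEnd ℂ) (w j)).re / ∑ i, Complex.normSq (w i))
            * ∑ i, Complex.normSq (w i) := mul_le_mul_of_nonneg_right h1 hden.le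
      _ = _ := div_mul_cancel₀ _ hden.ne'

lemma KIrange (hs : ∀ᵐ z ∂ν, ‖z‖ = 1) {lam : ℝ}
    (hlam : Tendsto (smallestEig (momMat ν)) atTop (𝓝 lam)) (N : ℕ) (v : ℕ → ℂ) :
    lam * ∑ j ∈ Finset.range (N + 1), Complex.normSq (v j) ≤ (Q ν N v v).re := by
  have h1 : Q ν N v v = ∑ i : Fin (N + 1), ∑ j : Fin (N + 1),
      (fun i : Fin (N + 1) => v i) i * momMat ν i j
        * (starRingEnd ℂ) ((fun i : Fin (N + 1) => v i) j) := by
    unfold Q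
    rw [Finset.sum_range fun i => ∑ j ∈ Finset.range (N + 1),
      v i * (starRingEnd ℂ) (v j) * momMat ν i j]
    refine Finset.sum_congr rfl fun i _ => ?_
    rw [Finset.sum_range fun j => v i * (starRingEnd ℂ) (v j) * momMat ν (i : ℕ) j]
    exact Finset.sum_congr rfl fun j _ => by ring
  rw [h1, Finset.sum_range fun j => Complex.normSq (v j)]
  exact KIfin hs hlam N _


/-- Coefficients of the reversed (star) orthonormal polynomial `φ*_n`. -/
def acoef (B : ℕ → ℕ → ℂ) (n j : ℕ) : ℂ :=
  if j ≤ n then (starRingEnd ℂ) (B (n - j) n) else 0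

/-- Coefficients of the reversed monic-star polynomial `Φ*_n = φ*_n / κ_n`. -/
def ccoef (B : ℕ → ℕ → ℂ) (n j : ℕ) : ℂ := (((B n n).re : ℝ) : ℂ)⁻¹ * acoef B n j

/-- `t n = ‖Φ*_n‖² = κ_n⁻²`. -/
def tseq (B : ℕ → ℕ → ℂ) (n : ℕ) : ℝ := ((B n n).re)⁻¹ ^ 2

section main
variable {B : ℕ → ℕ → ℂ}
  (hS : ∀ n m : ℕ, ∑ i ∈ Finset.range (n + 1), ∑ j ∈ Finset.range (m + 1),
      B i n * (starRingEnd ℂ) (B j m) * momMat ν i j = if n = m then 1 else 0)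
  (hdiag : ∀ n : ℕ, 0 < (B n n).re ∧ (B n n).im = 0)

lemma acoef_supp (n j : ℕ) (h : n < j) : acoef B n j = 0 := by
  unfold acoef; rw [if_neg (by omega)]

lemma ccoef_supp (n j : ℕ) (h : n < j) : ccoef B n j = 0 := by
  unfold ccoef; rw [acoef_supp n j h, mul_zero]

include hdiag in
lemma ccoef_zero (n : ℕ) : ccoef B n 0 = 1 := by
  unfold ccoef acoef
  rw [if_pos (Nat.zero_le n), Nat.sub_zero]
  have hconj : (starRingEnd ℂ) (B n n) = (((B n n).re : ℝ) : ℂ) := by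
    apply Complex.ext <;> simp [(hdiag n).2]
  have hne : (((B n n).re : ℝ) : ℂ) ≠ 0 := by exact_mod_cast (hdiag n).1.ne'
  rw [hconj, inv_mul_cancel₀ hne]

include hS in
lemma Qaa (hs : ∀ᵐ z ∂ν, ‖z‖ = 1) (n N : ℕ) (h : n ≤ N) :
    Q ν N (acoef B n) (acoef B n) = 1 := by
  rw [Qext (acoef_supp n) (acoef_supp n) h]
  rw [← starNorm hS hs n]
  unfold Q
  refine Finset.sum_congr rfl fun i hi => Finset.sum_congr rfl fun j hj => ?_
  have hi' : i ≤ n := by have := Finset.mem_range.1 hi; omega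
  have hj' : j ≤ n := by have := Finset.mem_range.1 hj; omega
  unfold acoef
  rw [if_pos hi', if_pos hj', Complex.conj_conj]

include hS hdiag in
lemma Qay (hs : ∀ᵐ z ∂ν, ‖z‖ = 1) (n : ℕ) (y : ℕ → ℂ) (h0 : y 0 = 0) :
    Q ν n (acoef B n) y = 0 := by
  unfold Q
  rw [Finset.sum_comm]
  refine Finset.sum_eq_zero fun j hj => ?_
  have hj' : j ≤ n := by have := Finset.mem_range.1 hj; omega
  have hpull : ∑ i ∈ Finset.range (n + 1), acoef B n i * (starRingEnd ℂ) (y j) * momMat ν i j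
      = (starRingEnd ℂ) (y j) * ∑ i ∈ Finset.range (n + 1), acoef B n i * momMat ν i j := by
    rw [Finset.mul_sum]
    exact Finset.sum_congr rfl fun i _ => by ring
  rw [hpull]
  rcases Nat.eq_zero_or_pos j with hj0 | hj1
  · rw [hj0, h0, map_zero, zero_mul]
  · have : ∑ i ∈ Finset.range (n + 1), acoef B n i * momMat ν i j
        = ∑ i ∈ Finset.range (n + 1), (starRingEnd ℂ) (B (n - i) n) * momMat ν i j := by
      refine Finset.sum_congr rfl fun i hi => ?_
      have hi' : i ≤ n := by have := Finset.mem_range.1 hi; omega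
      unfold acoef; rw [if_pos hi']
    rw [this, starOrth hS hdiag hs n j hj1 hj', mul_zero]

include hS hdiag in
lemma Qcc (hs : ∀ᵐ z ∂ν, ‖z‖ = 1) (n N : ℕ) (h : n ≤ N) :
    Q ν N (ccoef B n) (ccoef B n) = ((tseq B n : ℝ) : ℂ) := by
  unfold ccoef
  rw [Qsmul1, Qsmul2, Qaa hS hs n N h, mul_one, map_inv₀, Complex.conj_ofReal]
  unfold tseq
  push_cast
  ring


include hS hdiag in
lemma Qdiff (hs : ∀ᵐ z ∂ν, ‖z‖ = 1) (n m : ℕ) (hnm : n ≤ m) :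
    Q ν m (fun j => ccoef B n j - ccoef B m j) (fun j => ccoef B n j - ccoef B m j)
      = ((tseq B n - tseq B m : ℝ) : ℂ) := by
  set y : ℕ → ℂ := fun j => ccoef B n j - ccoef B m j with hy
  have hy0 : y 0 = 0 := by
    rw [hy]; simp only [ccoef_zero hdiag, sub_self]
  have hcm_y : Q ν m (ccoef B m) y = 0 := by
    have h1 : Q ν m (ccoef B m) y
        = ((((B m m).re : ℝ) : ℂ))⁻¹ * Q ν m (acoef B m) y := Qsmul1 m _ _ y
    rw [h1, Qay hS hdiag hs m y hy0, mul_zero]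
  have hy_cm : Q ν m y (ccoef B m) = 0 := by
    rw [← Qherm, hcm_y, map_zero]
  have hxe : (fun j => y j + ccoef B m j) = ccoef B n := by
    funext j; rw [hy]; ring
  have hsum : Q ν m (ccoef B n) (ccoef B n)
      = Q ν m y y + Q ν m y (ccoef B m)
        + (Q ν m (ccoef B m) y + Q ν m (ccoef B m) (ccoef B m)) := by
    conv_lhs => rw [← hxe]
    rw [Qadd1, Qadd2, Qadd2]
  rw [Qcc hS hdiag hs n m hnm, Qcc hS hdiag hs m m le_rfl, hcm_y, hy_cm] at hsum
  push_cast
  linear_combination -hsum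

end main

end Stmt10Aux

/-- for a measure `ν` on the unit circle with infinite support and
`lim λ_n(ν) > 0`, all the limits `lim_n b_{n-k,n}(ν)` of the coefficients of the
orthonormal polynomials of `ν` exist. -/
theorem stmt10 (ν : Measure ℂ) [IsFiniteMeasure ν]
    (hsupp : ν {z : ℂ | ‖z‖ ≠ 1} = 0)
    (hinf : ∀ s : Finset ℂ, ν ((s : Set ℂ))ᶜ ≠ 0)
    (B : ℕ → ℕ → ℂ)
    (htri : ∀ k n : ℕ, n < k → B k n = 0)
    (hdiag : ∀ n : ℕ, 0 < (B n n).re ∧ (B n n).im = 0)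
    (hortho : ∀ n m : ℕ,
      ∫ z, (∑ k ∈ Finset.range (n + 1), B k n * z ^ k) *
        (starRingEnd ℂ) (∑ k ∈ Finset.range (m + 1), B k m * z ^ k) ∂ν
          = if n = m then 1 else 0)
    (lam : ℝ) (hlam : Tendsto (smallestEig (momMat ν)) atTop (𝓝 lam)) (hpos : 0 < lam) :
    ∀ k : ℕ, ∃ β : ℂ, Tendsto (fun n => B (n - k) n) atTop (𝓝 β) := by
  intro k
  clear hinf htri
  have hs : ∀ᵐ z ∂ν, ‖z‖ = 1 := Stmt10Aux.ae_norm hsupp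
  have hS := Stmt10Aux.hortho_sum hs hortho
  -- key quantitative estimate
  have hest : ∀ n m : ℕ, n ≤ m →
      lam * ∑ j ∈ Finset.range (m + 1),
          Complex.normSq (Stmt10Aux.ccoef B n j - Stmt10Aux.ccoef B m j)
        ≤ Stmt10Aux.tseq B n - Stmt10Aux.tseq B m := by
    intro n m hnm
    have h1 := Stmt10Aux.KIrange hs hlam m
      (fun j => Stmt10Aux.ccoef B n j - Stmt10Aux.ccoef B m j)
    rwa [Stmt10Aux.Qdiff hS hdiag hs n m hnm, Complex.ofReal_re] at h1
  have htmono : Antitone (Stmt10Aux.tseq B) := by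
    intro n m hnm
    have h1 := hest n m hnm
    have h2 : 0 ≤ lam * ∑ j ∈ Finset.range (m + 1),
        Complex.normSq (Stmt10Aux.ccoef B n j - Stmt10Aux.ccoef B m j) :=
      mul_nonneg hpos.le (Finset.sum_nonneg fun j _ => Complex.normSq_nonneg _)
    linarith
  have htlb : ∀ n, lam ≤ Stmt10Aux.tseq B n := by
    intro n
    have h1 := Stmt10Aux.KIrange hs hlam n (Stmt10Aux.ccoef B n)
    rw [Stmt10Aux.Qcc hS hdiag hs n n le_rfl, Complex.ofReal_re] at h1
    have h2 : (1 : ℝ) ≤ ∑ j ∈ Finset.range (n + 1),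
        Complex.normSq (Stmt10Aux.ccoef B n j) := by
      have h3 := Finset.single_le_sum
        (f := fun j => Complex.normSq (Stmt10Aux.ccoef B n j))
        (fun j _ => Complex.normSq_nonneg _) (Finset.mem_range.2 (Nat.succ_pos n))
      simpa [Stmt10Aux.ccoef_zero hdiag] using h3
    nlinarith
  have hbdd : BddBelow (Set.range (Stmt10Aux.tseq B)) :=
    ⟨lam, by rintro x ⟨n, rfl⟩; exact htlb n⟩
  have htT : Tendsto (Stmt10Aux.tseq B) atTop (𝓝 (⨅ n, Stmt10Aux.tseq B n)) :=
    tendsto_atTop_ciInf htmono hbdd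
  set T : ℝ := ⨅ n, Stmt10Aux.tseq B n with hTdef
  have hTlam : lam ≤ T := le_ciInf htlb
  have hTpos : 0 < T := lt_of_lt_of_le hpos hTlam
  -- single-coefficient estimate
  have hcoef : ∀ n m : ℕ, n ≤ m → k ≤ m →
      lam * Complex.normSq (Stmt10Aux.ccoef B n k - Stmt10Aux.ccoef B m k)
        ≤ Stmt10Aux.tseq B n - Stmt10Aux.tseq B m := by
    intro n m hnm hkm
    refine le_trans (mul_le_mul_of_nonneg_left ?_ hpos.le) (hest n m hnm)
    exact Finset.single_le_sum
      (f := fun j => Complex.normSq (Stmt10Aux.ccoef B n j - Stmt10Aux.ccoef B m j))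
      (fun j _ => Complex.normSq_nonneg _) (Finset.mem_range.2 (Nat.lt_succ_of_le hkm))
  -- the sequence of k-th coefficients is Cauchy
  have hcauchy : CauchySeq (fun n => Stmt10Aux.ccoef B n k) := by
    rw [Metric.cauchySeq_iff']
    intro ε hε
    have htc : CauchySeq (Stmt10Aux.tseq B) := htT.cauchySeq
    rw [Metric.cauchySeq_iff'] at htc
    obtain ⟨N0, hN0⟩ := htc (lam * ε ^ 2) (by positivity)
    refine ⟨max N0 k, fun n hn => ?_⟩
    have hNn : max N0 k ≤ n := hn
    have h1 := hcoef (max N0 k) n hNn (le_trans (le_max_right N0 k) hNn)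
    have h2 : Stmt10Aux.tseq B (max N0 k) - Stmt10Aux.tseq B n < lam * ε ^ 2 := by
      have h3 := hN0 n (le_trans (le_max_left N0 k) hNn)
      have h4 : Stmt10Aux.tseq B (max N0 k) ≤ Stmt10Aux.tseq B N0 :=
        htmono (le_max_left N0 k)
      rw [Real.dist_eq] at h3
      have h5 : Stmt10Aux.tseq B N0 - Stmt10Aux.tseq B n < lam * ε ^ 2 := by
        have := abs_lt.1 h3
        linarith [this.2]
      linarith
    have h6 : Complex.normSq (Stmt10Aux.ccoef B (max N0 k) k - Stmt10Aux.ccoef B n k)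
        < ε ^ 2 := by
      have := lt_of_mul_lt_mul_left (lt_of_le_of_lt h1 h2) hpos.le
      linarith [this]
    rw [dist_eq_norm]
    have h7 : ‖Stmt10Aux.ccoef B n k - Stmt10Aux.ccoef B (max N0 k) k‖ ^ 2 < ε ^ 2 := by
      rw [← Complex.normSq_eq_norm_sq]
      have h8 : Complex.normSq (Stmt10Aux.ccoef B n k - Stmt10Aux.ccoef B (max N0 k) k)
          = Complex.normSq (Stmt10Aux.ccoef B (max N0 k) k - Stmt10Aux.ccoef B n k) := by
        rw [← Complex.normSq_neg, neg_sub]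
      rw [h8]; exact h6
    exact lt_of_pow_lt_pow_left₀ 2 hε.le h7
  obtain ⟨γ, hγ⟩ := cauchySeq_tendsto_of_complete hcauchy
  -- convergence of the leading coefficients κ_n
  have hκeq : ∀ n, (B n n).re = (Real.sqrt (Stmt10Aux.tseq B n))⁻¹ := by
    intro n
    unfold Stmt10Aux.tseq
    rw [Real.sqrt_sq (inv_nonneg.2 (hdiag n).1.le), inv_inv]
  have hsqrtne : Real.sqrt T ≠ 0 := (Real.sqrt_pos.2 hTpos).ne'
  have hκconv : Tendsto (fun n => (B n n).re) atTop (𝓝 ((Real.sqrt T)⁻¹)) := by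
    have h1 : Tendsto (fun n => Real.sqrt (Stmt10Aux.tseq B n)) atTop
        (𝓝 (Real.sqrt T)) := (Real.continuous_sqrt.tendsto T).comp htT
    have h2 := h1.inv₀ hsqrtne
    exact h2.congr fun n => (hκeq n).symm
  refine ⟨(((Real.sqrt T)⁻¹ : ℝ) : ℂ) * (starRingEnd ℂ) γ, ?_⟩
  have heq : ∀ n, k ≤ n →
      B (n - k) n = (((B n n).re : ℝ) : ℂ) * (starRingEnd ℂ) (Stmt10Aux.ccoef B n k) := by
    intro n hk
    unfold Stmt10Aux.ccoef Stmt10Aux.acoef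
    rw [if_pos hk, _root_.map_mul, map_inv₀, Complex.conj_ofReal, Complex.conj_conj]
    have hne : (((B n n).re : ℝ) : ℂ) ≠ 0 := by exact_mod_cast (hdiag n).1.ne'
    field_simp
  have hfin : Tendsto (fun n => (((B n n).re : ℝ) : ℂ) * (starRingEnd ℂ) (Stmt10Aux.ccoef B n k))
      atTop (𝓝 ((((Real.sqrt T)⁻¹ : ℝ) : ℂ) * (starRingEnd ℂ) γ)) := by
    exact Tendsto.mul ((Complex.continuous_ofReal.tendsto _).comp hκconv)
      ((Complex.continuous_conj.tendsto _).comp hγ)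
  exact hfin.congr' (eventually_atTop.2 ⟨k, fun n hn => (heq n hn).symm⟩)
end
end

section
/- Let ν be a positive measure on the unit circle 𝕋 with infinite support, let m be the normalized Lebesgue measure on 𝕋, and assume m is absolutely continuous with respect to ν. Then the following are equivalent: (1) lim_{n→∞} λ_n(ν) = λ > 0; (2) every f in P²(ν) (the closure of the polynomials in L²(ν)) belongs, via its ν-a.e. class (which determines an m-a.e. class since m ≪ ν), to L²(m), and the identity map I_ν : P²(ν) → L²(m) is bounded; in that case ∫ |f|² dm ≤ λ^{-1} ∫ |f|² dν for every f ∈ P²(ν), with ‖I_ν‖ = λ^{-1/2}. -/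
open MeasureTheory Filter Matrix
open scoped ComplexOrder Topology

noncomputable section

/-- The normalized Lebesgue (arc-length) measure `dθ/(2π)` on the unit circle,
as a measure on `ℂ`. -/
def mCirc : Measure ℂ :=
  (ENNReal.ofReal (2 * Real.pi))⁻¹ •
    Measure.map (fun θ : ℝ => Complex.exp (θ * Complex.I))
      (volume.restrict (Set.Ioc 0 (2 * Real.pi)))

/-- `P²(ν)`: the closure in `L²(ν)` of the set of (classes of) polynomial functions. -/
def polyClosure (ν : Measure ℂ) : Set (Lp ℂ 2 ν) :=
  closure {f : Lp ℂ 2 ν | ∃ p : Polynomial ℂ, (f : ℂ → ℂ) =ᵐ[ν] fun z => p.eval z}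


section Aux

open intervalIntegral

lemma re_mul_conj (w : ℂ) : (w * (starRingEnd ℂ) w).re = ‖w‖^2 := by
  rw [Complex.mul_conj]
  simp [Complex.normSq_eq_norm_sq, ← Complex.ofReal_pow]

lemma integrable_boundedAE {μ : Measure ℂ} [IsFiniteMeasure μ] {f : ℂ → ℂ}
    (hm : AEStronglyMeasurable f μ) (C : ℝ)
    (hb : ∀ᵐ z ∂μ, ‖f z‖ ≤ C) : Integrable f μ :=
  (MemLp.of_bound hm C hb : MemLp f 1 μ).integrable le_rfl

lemma meas_pow_conj (i j : ℕ) : Measurable (fun z : ℂ => z ^ i * (starRingEnd ℂ) z ^ j) :=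
  (measurable_id.pow_const i).mul ((Complex.continuous_conj.measurable).pow_const j)

lemma circleMap_meas : Measurable (fun θ : ℝ => Complex.exp (θ * Complex.I)) := by
  fun_prop

lemma norm_exp_I (θ : ℝ) : ‖Complex.exp (θ * Complex.I)‖ = 1 := by
  simpa using Complex.abs_exp_ofReal_mul_I θ

lemma mCirc_null : mCirc {z : ℂ | ‖z‖ ≠ 1} = 0 := by
  have hms : MeasurableSet {z : ℂ | ‖z‖ ≠ 1} :=
    ((measurable_norm.comp measurable_id) (measurableSet_singleton (1:ℝ)).compl)
  simp only [mCirc, Measure.smul_apply]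
  rw [Measure.map_apply circleMap_meas hms]
  have : (fun θ : ℝ => Complex.exp (θ * Complex.I)) ⁻¹' {z : ℂ | ‖z‖ ≠ 1} = ∅ := by
    ext θ; simp [norm_exp_I θ]
  rw [this]; simp

lemma mCirc_ae_norm_one : ∀ᵐ z ∂mCirc, ‖z‖ = 1 := by
  have hset : {z : ℂ | ‖z‖ = 1}ᶜ = {z : ℂ | ‖z‖ ≠ 1} := by ext z; simp
  have : {z : ℂ | ‖z‖ = 1} ∈ ae mCirc := by
    rw [mem_ae_iff, hset]; exact mCirc_null
  exact this

instance : IsProbabilityMeasure mCirc := by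
  constructor
  simp only [mCirc, Measure.smul_apply]
  rw [Measure.map_apply circleMap_meas MeasurableSet.univ]
  simp only [Set.preimage_univ, Measure.restrict_apply MeasurableSet.univ, Set.univ_inter,
    Real.volume_Ioc, sub_zero]
  rw [smul_eq_mul, ENNReal.inv_mul_cancel] <;>
    simp [Real.pi_pos, le_of_lt, ne_of_gt, Real.two_pi_pos, ENNReal.mul_eq_top]

lemma integral_mCirc (f : ℂ → ℂ) (hf : Measurable f) :
    ∫ z, f z ∂mCirc
      = (2 * Real.pi)⁻¹ • ∫ θ in Set.Ioc 0 (2*Real.pi), f (Complex.exp (θ * Complex.I)) := by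
  rw [mCirc, MeasureTheory.integral_smul_measure,
    integral_map circleMap_meas.aemeasurable hf.aestronglyMeasurable]
  · congr 1
    rw [ENNReal.toReal_inv, ENNReal.toReal_ofReal (by positivity)]

lemma momMat_mCirc (i j : ℕ) : momMat mCirc i j = if i = j then 1 else 0 := by
  have hmeas : Measurable fun z : ℂ => z ^ i * (starRingEnd ℂ) z ^ j := meas_pow_conj i j
  rw [momMat, integral_mCirc _ hmeas]
  have key : ∀ θ : ℝ, Complex.exp (θ * Complex.I) ^ i
      * (starRingEnd ℂ) (Complex.exp (θ * Complex.I)) ^ j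
      = Complex.exp ((((i:ℂ) - (j:ℂ)) * Complex.I) * θ) := by
    intro θ
    rw [← Complex.exp_nat_mul, ← Complex.exp_conj, ← Complex.exp_nat_mul, ← Complex.exp_add]
    congr 1
    rw [_root_.map_mul, Complex.conj_I, Complex.conj_ofReal]
    push_cast
    ring
  simp only [key]
  rcases eq_or_ne i j with h | h
  · subst h
    simp only [sub_self, zero_mul, Complex.exp_zero]
    rw [MeasureTheory.setIntegral_const]
    simp only [Real.volume_Ioc, sub_zero, ENNReal.toReal_ofReal Real.two_pi_pos.le, smul_eq_mul,
      mul_one, if_pos rfl, Complex.real_smul]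
    rw [if_pos trivial, ← Complex.ofReal_mul, Real.volume_real_Ioc_of_le Real.two_pi_pos.le, sub_zero, inv_mul_cancel₀ Real.two_pi_pos.ne']
    norm_num
  · have hij : ((i:ℂ)) ≠ ((j:ℂ)) := by exact_mod_cast h
    have hc : (((i:ℂ) - (j:ℂ)) * Complex.I : ℂ) ≠ 0 :=
      mul_ne_zero (sub_ne_zero.mpr hij) Complex.I_ne_zero
    rw [← integral_of_le Real.two_pi_pos.le, integral_exp_mul_complex hc]
    have h1 : Complex.exp ((((i:ℂ) - (j:ℂ)) * Complex.I) * (2 * Real.pi)) = 1 := by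
      rw [show ((((i:ℂ) - (j:ℂ)) * Complex.I) * (2 * (Real.pi:ℂ)))
          = ((i:ℤ)-(j:ℤ)) * (2 * Real.pi * Complex.I) by push_cast; ring]
      exact_mod_cast Complex.exp_int_mul_two_pi_mul_I ((i:ℤ) - (j:ℤ))
    rw [if_neg h]
    push_cast
    rw [h1]
    simp

lemma quad_form_eq {μ : Measure ℂ} [IsFiniteMeasure μ] (h1 : ∀ᵐ z ∂μ, ‖z‖ = 1)
    (n : ℕ) (v : Fin (n+1) → ℂ) :
    (∑ i : Fin (n+1), ∑ j : Fin (n+1), v i * momMat μ i j * (starRingEnd ℂ) (v j)).re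
      = ∫ z, ‖∑ i : Fin (n+1), v i * z ^ (i:ℕ)‖^2 ∂μ := by
  set c := starRingEnd ℂ with hc
  have hint : ∀ (i j : Fin (n+1)),
      Integrable (fun z : ℂ => (v i * c (v j)) * (z ^ (i:ℕ) * c z ^ (j:ℕ))) μ := by
    intro i j
    refine integrable_boundedAE ((measurable_const.mul (meas_pow_conj i j)).aestronglyMeasurable)
      (‖v i * c (v j)‖) ?_
    filter_upwards [h1] with z hz
    have h2 : ‖z ^ (i:ℕ) * c z ^ (j:ℕ)‖ = 1 := by
      rw [norm_mul, norm_pow, norm_pow, hc, starRingEnd_apply, norm_star, hz]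
      norm_num
    rw [norm_mul, h2, mul_one]
  have step1 : ∀ (i j : Fin (n+1)), v i * momMat μ i j * c (v j)
      = ∫ z, (v i * c (v j)) * (z ^ (i:ℕ) * c z ^ (j:ℕ)) ∂μ := by
    intro i j
    rw [MeasureTheory.integral_const_mul, momMat]
    ring
  have step2 : (∑ i : Fin (n+1), ∑ j : Fin (n+1), v i * momMat μ i j * c (v j))
      = ∫ z, (∑ i : Fin (n+1), v i * z ^ (i:ℕ)) * c (∑ j : Fin (n+1), v j * z ^ (j:ℕ)) ∂μ := by
    simp_rw [step1]
    calc ∑ i : Fin (n+1), ∑ j : Fin (n+1), ∫ z, (v i * c (v j)) * (z ^ (i:ℕ) * c z ^ (j:ℕ)) ∂μ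
        = ∑ i : Fin (n+1), ∫ z, ∑ j : Fin (n+1), (v i * c (v j)) * (z ^ (i:ℕ) * c z ^ (j:ℕ)) ∂μ :=
          Finset.sum_congr rfl (fun i _ => (integral_finset_sum _ (fun j _ => hint i j)).symm)
      _ = ∫ z, ∑ i : Fin (n+1), ∑ j : Fin (n+1), (v i * c (v j)) * (z ^ (i:ℕ) * c z ^ (j:ℕ)) ∂μ :=
          (integral_finset_sum _ (fun i _ => integrable_finset_sum _ (fun j _ => hint i j))).symm
      _ = ∫ z, (∑ i : Fin (n+1), v i * z ^ (i:ℕ)) * c (∑ j : Fin (n+1), v j * z ^ (j:ℕ)) ∂μ := by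
          congr 1
          ext z
          rw [map_sum, Finset.sum_mul_sum]
          refine Finset.sum_congr rfl (fun i _ => Finset.sum_congr rfl (fun j _ => ?_))
          simp only [_root_.map_mul, _root_.map_pow]
          ring
  rw [step2]
  have hintP : Integrable
      (fun z => (∑ i : Fin (n+1), v i * z ^ (i:ℕ)) * c (∑ j : Fin (n+1), v j * z ^ (j:ℕ))) μ := by
    refine integrable_boundedAE ?_ ((∑ i : Fin (n+1), ‖v i‖)^2) ?_
    · apply Measurable.aestronglyMeasurable
      exact (by fun_prop : Measurable fun z : ℂ => ∑ i : Fin (n+1), v i * z ^ (i:ℕ)).mul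
        ((Complex.continuous_conj.measurable).comp (by fun_prop))
    · filter_upwards [h1] with z hz
      have hP : ‖∑ i : Fin (n+1), v i * z ^ (i:ℕ)‖ ≤ ∑ i : Fin (n+1), ‖v i‖ := by
        refine (norm_sum_le _ _).trans (le_of_eq (Finset.sum_congr rfl (fun i _ => ?_)))
        rw [norm_mul, norm_pow, hz, one_pow, mul_one]
      rw [norm_mul, hc, starRingEnd_apply, norm_star, sq]
      exact mul_le_mul hP hP (norm_nonneg _) ((norm_nonneg _).trans hP)
  have := integral_re (μ := μ) hintP
  rw [show (∫ z, (∑ i : Fin (n+1), v i * z ^ (i:ℕ)) * c (∑ j : Fin (n+1), v j * z ^ (j:ℕ)) ∂μ).re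
      = RCLike.re (∫ z, (∑ i : Fin (n+1), v i * z ^ (i:ℕ)) * c (∑ j : Fin (n+1), v j * z ^ (j:ℕ)) ∂μ)
      from rfl, ← this]
  refine integral_congr_ae (Eventually.of_forall (fun z => ?_))
  exact re_mul_conj _

lemma norm_sq_L2 (μ : Measure ℂ) (f : Lp ℂ 2 μ) : ‖f‖^2 = ∫ z, ‖(f : ℂ → ℂ) z‖^2 ∂μ := by
  have h1 : ‖f‖^2 = RCLike.re (inner (𝕜 := ℂ) f f) := norm_sq_eq_re_inner f
  rw [h1, MeasureTheory.L2.inner_def, ← integral_re (L2.integrable_inner f f)]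
  refine integral_congr_ae (Filter.Eventually.of_forall (fun z => ?_))
  simp only []
  rw [RCLike.inner_apply]
  have : ((starRingEnd ℂ) ((f : ℂ → ℂ) z) * (f : ℂ → ℂ) z)
      = ((f : ℂ → ℂ) z) * (starRingEnd ℂ) ((f : ℂ → ℂ) z) := mul_comm _ _
  rw [show (RCLike.re : ℂ → ℝ) = Complex.re from rfl]
  rw [Complex.mul_conj]
  simp [Complex.normSq_eq_norm_sq, ← Complex.ofReal_pow]

lemma memℒp_poly {μ : Measure ℂ} [IsFiniteMeasure μ] (h1 : ∀ᵐ z ∂μ, ‖z‖ = 1)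
    (p : Polynomial ℂ) : MemLp (fun z => p.eval z) 2 μ := by
  refine MemLp.of_bound (Continuous.aestronglyMeasurable (by continuity))
    (∑ i ∈ Finset.range (p.natDegree + 1), ‖p.coeff i‖) ?_
  filter_upwards [h1] with z hz
  rw [Polynomial.eval_eq_sum_range]
  refine (norm_sum_le _ _).trans (le_of_eq (Finset.sum_congr rfl (fun i _ => ?_)))
  rw [norm_mul, norm_pow, hz, one_pow, mul_one]

lemma integral_sq_mCirc (n : ℕ) (v : Fin (n+1) → ℂ) :
    ∫ z, ‖∑ i : Fin (n+1), v i * z ^ (i:ℕ)‖^2 ∂mCirc = ∑ i, Complex.normSq (v i) := by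
  rw [← quad_form_eq mCirc_ae_norm_one n v]
  have h : ∀ i j : Fin (n+1), v i * momMat mCirc i j * (starRingEnd ℂ) (v j)
      = if j = i then v i * (starRingEnd ℂ) (v i) else 0 := by
    intro i j
    rw [momMat_mCirc]
    rcases eq_or_ne j i with rfl | hji
    · simp
    · rw [if_neg (fun hh => hji (Fin.ext hh).symm), if_neg hji]
      ring
  simp_rw [h]
  simp [Complex.mul_conj]

lemma quad_re_nonneg {μ : Measure ℂ} [IsFiniteMeasure μ] (h1 : ∀ᵐ z ∂μ, ‖z‖ = 1)
    (n : ℕ) (v : Fin (n+1) → ℂ) :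
    0 ≤ (∑ i : Fin (n+1), ∑ j : Fin (n+1), v i * momMat μ i j * (starRingEnd ℂ) (v j)).re := by
  rw [quad_form_eq h1 n v]
  exact integral_nonneg (fun z => by positivity)

lemma smallestEig_bddBelow (ν : Measure ℂ) [IsFiniteMeasure ν] (h1 : ∀ᵐ z ∂ν, ‖z‖ = 1) (n : ℕ) :
    BddBelow (Set.range fun v : {v : Fin (n + 1) → ℂ // v ≠ 0} =>
      (∑ i : Fin (n + 1), ∑ j : Fin (n + 1),
        v.1 i * momMat ν i j * (starRingEnd ℂ) (v.1 j)).re / ∑ i, Complex.normSq (v.1 i)) := by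
  refine ⟨0, ?_⟩
  rintro x ⟨v, rfl⟩
  exact div_nonneg (quad_re_nonneg h1 n v.1)
    (Finset.sum_nonneg (fun i _ => Complex.normSq_nonneg _))

lemma smallestEig_le_poly (ν : Measure ℂ) [IsFiniteMeasure ν] (h1 : ∀ᵐ z ∂ν, ‖z‖ = 1)
    (p : Polynomial ℂ) (hp : p ≠ 0) (n : ℕ) (hn : p.natDegree < n + 1) :
    smallestEig (momMat ν) n
      ≤ (∫ z, ‖p.eval z‖^2 ∂ν) / (∫ z, ‖p.eval z‖^2 ∂mCirc) := by
  set v : Fin (n+1) → ℂ := fun i => p.coeff i with hv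
  have hv0 : v ≠ 0 := by
    intro h0
    have h2 := congrFun h0 ⟨p.natDegree, hn⟩
    simp only [hv, Pi.zero_apply] at h2
    exact hp (Polynomial.leadingCoeff_eq_zero.mp h2)
  have hev : ∀ z : ℂ, (∑ i : Fin (n+1), v i * z ^ (i:ℕ)) = p.eval z := by
    intro z
    rw [Polynomial.eval_eq_sum_range' hn z,
      ← Fin.sum_univ_eq_sum_range (fun i => p.coeff i * z ^ i)]
  have hle := ciInf_le (smallestEig_bddBelow ν h1 n) ⟨v, hv0⟩
  refine le_trans hle (le_of_eq ?_)
  have hnum := quad_form_eq h1 n v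
  have hden := integral_sq_mCirc n v
  simp_rw [hev] at hnum hden
  rw [hnum, ← hden]

lemma sum_normSq_pos {n : ℕ} {v : Fin (n+1) → ℂ} (hv : v ≠ 0) :
    0 < ∑ i, Complex.normSq (v i) := by
  obtain ⟨i, hi⟩ := Function.ne_iff.mp hv
  refine Finset.sum_pos' (fun j _ => Complex.normSq_nonneg _) ⟨i, Finset.mem_univ i, ?_⟩
  simpa [Complex.normSq_pos] using hi

lemma integral_sq_mCirc_pos (p : Polynomial ℂ) (hp : p ≠ 0) :
    0 < ∫ z, ‖p.eval z‖^2 ∂mCirc := by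
  set n := p.natDegree
  set v : Fin (n+1) → ℂ := fun i => p.coeff i with hv
  have hv0 : v ≠ 0 := by
    intro h0
    have h2 := congrFun h0 ⟨n, Nat.lt_succ_self n⟩
    simp only [hv, Pi.zero_apply] at h2
    exact hp (Polynomial.leadingCoeff_eq_zero.mp h2)
  have hev : ∀ z : ℂ, (∑ i : Fin (n+1), v i * z ^ (i:ℕ)) = p.eval z := by
    intro z
    rw [Polynomial.eval_eq_sum_range' (Nat.lt_succ_self n) z,
      ← Fin.sum_univ_eq_sum_range (fun i => p.coeff i * z ^ i)]
  have hden := integral_sq_mCirc n v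
  simp_rw [hev] at hden
  rw [hden]
  exact sum_normSq_pos hv0

lemma poly_bound (ν : Measure ℂ) [IsFiniteMeasure ν] (h1 : ∀ᵐ z ∂ν, ‖z‖ = 1)
    {lam : ℝ} (hlam : Tendsto (smallestEig (momMat ν)) atTop (𝓝 lam)) (hpos : 0 < lam)
    (p : Polynomial ℂ) :
    ∫ z, ‖p.eval z‖^2 ∂mCirc ≤ lam⁻¹ * ∫ z, ‖p.eval z‖^2 ∂ν := by
  rcases eq_or_ne p 0 with rfl | hp
  · simp
  have hB : 0 < ∫ z, ‖p.eval z‖^2 ∂mCirc := integral_sq_mCirc_pos p hp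
  have hle : lam ≤ (∫ z, ‖p.eval z‖^2 ∂ν) / (∫ z, ‖p.eval z‖^2 ∂mCirc) := by
    refine le_of_tendsto hlam (eventually_atTop.mpr ⟨p.natDegree, fun n hn => ?_⟩)
    exact smallestEig_le_poly ν h1 p hp n (Nat.lt_succ_of_le hn)
  rw [le_div_iff₀ hB] at hle
  calc ∫ z, ‖p.eval z‖^2 ∂mCirc
      = lam⁻¹ * (lam * ∫ z, ‖p.eval z‖^2 ∂mCirc) := by
        rw [← mul_assoc, inv_mul_cancel₀ hpos.ne', one_mul]
    _ ≤ lam⁻¹ * ∫ z, ‖p.eval z‖^2 ∂ν := by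
        exact mul_le_mul_of_nonneg_left hle (inv_nonneg.mpr hpos.le)

lemma converse_bound (ν : Measure ℂ) [IsFiniteMeasure ν] (h1 : ∀ᵐ z ∂ν, ‖z‖ = 1)
    (hac : mCirc ≪ ν) (C : ℝ)
    (hC : ∀ f ∈ polyClosure ν,
      ∫ z, ‖(f : ℂ → ℂ) z‖ ^ 2 ∂mCirc ≤ C * ∫ z, ‖(f : ℂ → ℂ) z‖ ^ 2 ∂ν)
    (n : ℕ) (v : Fin (n+1) → ℂ) (hv : v ≠ 0) :
    0 < C ∧ 1/C ≤ (∑ i : Fin (n + 1), ∑ j : Fin (n + 1),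
        v i * momMat ν i j * (starRingEnd ℂ) (v j)).re / ∑ i, Complex.normSq (v i) := by
  set p : Polynomial ℂ := ∑ i : Fin (n+1), Polynomial.C (v i) * Polynomial.X ^ (i:ℕ) with hp
  have hev : ∀ z : ℂ, p.eval z = ∑ i : Fin (n+1), v i * z ^ (i:ℕ) := by
    intro z
    rw [hp, Polynomial.eval_finset_sum]
    simp
  have hm : MemLp (fun z => p.eval z) 2 ν := memℒp_poly h1 p
  set f : Lp ℂ 2 ν := hm.toLp _ with hf
  have hfmem : f ∈ polyClosure ν := subset_closure ⟨p, hm.coeFn_toLp⟩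
  have hfble := hC f hfmem
  have hfν : (f : ℂ → ℂ) =ᵐ[ν] fun z => p.eval z := hm.coeFn_toLp
  have hfm : (f : ℂ → ℂ) =ᵐ[mCirc] fun z => p.eval z := hac.ae_le hfν
  have e1 : ∫ z, ‖(f : ℂ → ℂ) z‖ ^ 2 ∂ν = ∫ z, ‖p.eval z‖^2 ∂ν :=
    integral_congr_ae (hfν.mono (fun z hz => by simp [hz]))
  have e2 : ∫ z, ‖(f : ℂ → ℂ) z‖ ^ 2 ∂mCirc = ∫ z, ‖p.eval z‖^2 ∂mCirc :=
    integral_congr_ae (hfm.mono (fun z hz => by simp [hz]))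
  rw [e1, e2] at hfble
  have hnum := quad_form_eq h1 n v
  have hden := integral_sq_mCirc n v
  simp_rw [← hev] at hnum hden
  set A := (∑ i : Fin (n + 1), ∑ j : Fin (n + 1),
      v i * momMat ν i j * (starRingEnd ℂ) (v j)).re with hA
  set B := ∑ i, Complex.normSq (v i) with hB
  have hBpos : 0 < B := sum_normSq_pos hv
  have hA0 : 0 ≤ A := quad_re_nonneg h1 n v
  have hble : B ≤ C * A := by rw [hden, ← hnum] at hfble; exact hfble
  have hCA : 0 < C * A := lt_of_lt_of_le hBpos hble
  have hApos : 0 < A := by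
    rcases hA0.lt_or_eq with h | h
    · exact h
    · exfalso; rw [← h, mul_zero] at hCA; exact lt_irrefl 0 hCA
  have hCpos : 0 < C := by
    rcases mul_pos_iff.mp hCA with ⟨h, _⟩ | ⟨_, h⟩
    · exact h
    · exact absurd hApos (not_lt.mpr h.le)
  refine ⟨hCpos, ?_⟩
  rw [div_le_div_iff₀ hCpos hBpos]
  nlinarith [hble]

end Aux


set_option synthInstance.maxHeartbeats 1000000 in
lemma key_closure (ν : Measure ℂ) [IsFiniteMeasure ν]
    (hac : mCirc ≪ ν) (c : ℝ) (hc : 0 ≤ c)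
    (hpoly : ∀ p : Polynomial ℂ, ∫ z, ‖p.eval z‖^2 ∂mCirc ≤ c * ∫ z, ‖p.eval z‖^2 ∂ν)
    (f : Lp ℂ 2 ν) (hf : f ∈ polyClosure ν) :
    MemLp (f : ℂ → ℂ) 2 mCirc ∧
      ∫ z, ‖(f : ℂ → ℂ) z‖^2 ∂mCirc ≤ c * ∫ z, ‖(f : ℂ → ℂ) z‖^2 ∂ν := by
  obtain ⟨u, hu_mem, hu_tend⟩ := mem_closure_iff_seq_limit.mp hf
  choose q hq using hu_mem
  set g : ℕ → Lp ℂ 2 mCirc := fun k => (memℒp_poly mCirc_ae_norm_one (q k)).toLp _ with hg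
  have hgq : ∀ k, (g k : ℂ → ℂ) =ᵐ[mCirc] fun z => (q k).eval z := fun k => MemLp.coeFn_toLp _
  have huq : ∀ k, (u k : ℂ → ℂ) =ᵐ[ν] fun z => (q k).eval z := hq
  have hsingle : ∀ k, ‖g k‖^2 ≤ c * ‖u k‖^2 := by
    intro k
    rw [norm_sq_L2, norm_sq_L2]
    have e1 : ∫ z, ‖(g k : ℂ → ℂ) z‖^2 ∂mCirc = ∫ z, ‖(q k).eval z‖^2 ∂mCirc :=
      integral_congr_ae ((hgq k).mono (fun z hz => by simp [hz]))
    have e2 : ∫ z, ‖(u k : ℂ → ℂ) z‖^2 ∂ν = ∫ z, ‖(q k).eval z‖^2 ∂ν :=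
      integral_congr_ae ((huq k).mono (fun z hz => by simp [hz]))
    rw [e1, e2]; exact hpoly (q k)
  have hdiff : ∀ k l, ‖g k - g l‖^2 ≤ c * ‖u k - u l‖^2 := by
    intro k l
    rw [norm_sq_L2, norm_sq_L2]
    have e1 : ((g k - g l : Lp ℂ 2 mCirc) : ℂ → ℂ) =ᵐ[mCirc] fun z => (q k - q l).eval z := by
      filter_upwards [Lp.coeFn_sub (g k) (g l), hgq k, hgq l] with z hz h1' h2'
      rw [hz]
      simp only [Pi.sub_apply, h1', h2', Polynomial.eval_sub]
    have e2 : ((u k - u l : Lp ℂ 2 ν) : ℂ → ℂ) =ᵐ[ν] fun z => (q k - q l).eval z := by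
      filter_upwards [Lp.coeFn_sub (u k) (u l), huq k, huq l] with z hz h1' h2'
      rw [hz]
      simp only [Pi.sub_apply, h1', h2', Polynomial.eval_sub]
    have e1' : (fun z => ‖((g k - g l : Lp ℂ 2 mCirc) : ℂ → ℂ) z‖^2)
        =ᵐ[mCirc] (fun z => ‖(q k - q l).eval z‖^2) :=
      e1.mono (fun z hz => by simp only [hz])
    have e2' : (fun z => ‖((u k - u l : Lp ℂ 2 ν) : ℂ → ℂ) z‖^2)
        =ᵐ[ν] (fun z => ‖(q k - q l).eval z‖^2) :=
      e2.mono (fun z hz => by simp only [hz])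
    rw [integral_congr_ae e1', integral_congr_ae e2']
    exact hpoly (q k - q l)
  have hgdist : ∀ k l, dist (g k) (g l) ≤ Real.sqrt c * dist (u k) (u l) := by
    intro k l
    rw [dist_eq_norm, dist_eq_norm]
    have h2 := hdiff k l
    rw [show ‖g k - g l‖ = Real.sqrt (‖g k - g l‖^2) from (Real.sqrt_sq (norm_nonneg _)).symm]
    calc Real.sqrt (‖g k - g l‖^2) ≤ Real.sqrt (c * ‖u k - u l‖^2) := Real.sqrt_le_sqrt h2
      _ = Real.sqrt c * ‖u k - u l‖ := by
          rw [Real.sqrt_mul hc, Real.sqrt_sq (norm_nonneg _)]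
  have hCu : CauchySeq u := hu_tend.cauchySeq
  have hCg : CauchySeq g := by
    rw [Metric.cauchySeq_iff]
    intro ε hε
    have hε' : 0 < ε / (Real.sqrt c + 1) := by positivity
    obtain ⟨N, hN⟩ := Metric.cauchySeq_iff.mp hCu (ε / (Real.sqrt c + 1)) hε'
    refine ⟨N, fun k hk l hl => ?_⟩
    calc dist (g k) (g l) ≤ Real.sqrt c * dist (u k) (u l) := hgdist k l
      _ ≤ Real.sqrt c * (ε / (Real.sqrt c + 1)) :=
          mul_le_mul_of_nonneg_left (le_of_lt (hN k hk l hl)) (Real.sqrt_nonneg c)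
      _ < (Real.sqrt c + 1) * (ε / (Real.sqrt c + 1)) :=
          mul_lt_mul_of_pos_right (lt_add_one _) hε'
      _ = ε := by field_simp
  obtain ⟨G, hG⟩ := cauchySeq_tendsto_of_complete hCg
  have hGf : ‖G‖^2 ≤ c * ‖f‖^2 := by
    refine le_of_tendsto_of_tendsto' ((hG.norm).pow 2) (((hu_tend.norm).pow 2).const_mul c)
      (fun k => hsingle k)
  -- a.e. identification
  have hT1 : Tendsto (fun k => eLpNorm ((u k : ℂ → ℂ) - (f : ℂ → ℂ)) 2 ν) atTop (𝓝 0) := by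
    have hnorm : Tendsto (fun k => ‖u k - f‖) atTop (𝓝 0) :=
      tendsto_iff_norm_sub_tendsto_zero.mp hu_tend
    have he : ∀ k, eLpNorm ((u k : ℂ → ℂ) - (f : ℂ → ℂ)) 2 ν = ENNReal.ofReal ‖u k - f‖ := by
      intro k
      rw [← eLpNorm_congr_ae (Lp.coeFn_sub (u k) f), Lp.norm_def,
        ENNReal.ofReal_toReal (Lp.eLpNorm_ne_top _)]
    simp_rw [he]
    simpa using ENNReal.tendsto_ofReal hnorm
  have hT2 : Tendsto (fun k => eLpNorm ((g k : ℂ → ℂ) - (G : ℂ → ℂ)) 2 mCirc) atTop (𝓝 0) := by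
    have hnorm : Tendsto (fun k => ‖g k - G‖) atTop (𝓝 0) :=
      tendsto_iff_norm_sub_tendsto_zero.mp hG
    have he : ∀ k, eLpNorm ((g k : ℂ → ℂ) - (G : ℂ → ℂ)) 2 mCirc = ENNReal.ofReal ‖g k - G‖ := by
      intro k
      rw [← eLpNorm_congr_ae (Lp.coeFn_sub (g k) G), Lp.norm_def,
        ENNReal.ofReal_toReal (Lp.eLpNorm_ne_top _)]
    simp_rw [he]
    simpa using ENNReal.tendsto_ofReal hnorm
  have hTIMu : TendstoInMeasure ν (fun k => (u k : ℂ → ℂ)) atTop (f : ℂ → ℂ) :=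
    tendstoInMeasure_of_tendsto_eLpNorm (by norm_num)
      (fun k => Lp.aestronglyMeasurable _) (Lp.aestronglyMeasurable f) hT1
  obtain ⟨ns, hns, hae_u⟩ := hTIMu.exists_seq_tendsto_ae
  have hTIMg : TendstoInMeasure mCirc (fun k => (g k : ℂ → ℂ)) atTop (G : ℂ → ℂ) :=
    tendstoInMeasure_of_tendsto_eLpNorm (by norm_num)
      (fun k => Lp.aestronglyMeasurable _) (Lp.aestronglyMeasurable G) hT2
  have hTIMg' : TendstoInMeasure mCirc (fun i => (g (ns i) : ℂ → ℂ)) atTop (G : ℂ → ℂ) :=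
    fun ε hε => (hTIMg ε hε).comp hns.tendsto_atTop
  obtain ⟨ms, hms, hae_g⟩ := hTIMg'.exists_seq_tendsto_ae
  have hae_u_m : ∀ᵐ z ∂mCirc, Tendsto (fun i => (u (ns i) : ℂ → ℂ) z) atTop (𝓝 ((f : ℂ → ℂ) z)) :=
    hac.ae_le hae_u
  have hqm : ∀ᵐ z ∂mCirc, ∀ k, (u k : ℂ → ℂ) z = (g k : ℂ → ℂ) z := by
    rw [ae_all_iff]
    intro k
    have h1' : (u k : ℂ → ℂ) =ᵐ[mCirc] fun z => (q k).eval z := hac.ae_le (huq k)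
    filter_upwards [h1', hgq k] with z e1 e2
    rw [e1, e2]
  have heq : (f : ℂ → ℂ) =ᵐ[mCirc] (G : ℂ → ℂ) := by
    filter_upwards [hae_u_m, hqm, hae_g] with z h1' h2' h3'
    have l1 : Tendsto (fun i => (u (ns (ms i)) : ℂ → ℂ) z) atTop (𝓝 ((f : ℂ → ℂ) z)) :=
      h1'.comp hms.tendsto_atTop
    have l2 : Tendsto (fun i => (u (ns (ms i)) : ℂ → ℂ) z) atTop (𝓝 ((G : ℂ → ℂ) z)) :=
      h3'.congr (fun i => (h2' (ns (ms i))).symm)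
    exact tendsto_nhds_unique l1 l2
  refine ⟨(Lp.memLp G).ae_eq heq.symm, ?_⟩
  have e3 : ∫ z, ‖(f : ℂ → ℂ) z‖^2 ∂mCirc = ‖G‖^2 := by
    rw [norm_sq_L2]
    exact integral_congr_ae (heq.mono (fun z hz => by simp [hz]))
  have e4 : ∫ z, ‖(f : ℂ → ℂ) z‖^2 ∂ν = ‖f‖^2 := (norm_sq_L2 ν f).symm
  rw [e3, e4]
  exact hGf


/-- for a measure `ν` on the unit circle with infinite support and
`m ≪ ν`, `lim λ_n(ν) = λ > 0` iff every `f ∈ P²(ν)` lies in `L²(m)` and the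
identity map `P²(ν) → L²(m)` is bounded; in that case
`∫|f|² dm ≤ λ⁻¹ ∫|f|² dν` on `P²(ν)`, with `λ⁻¹` the optimal constant
(i.e. `‖I_ν‖ = λ^{-1/2}`). -/

theorem stmt14 (ν : Measure ℂ) [IsFiniteMeasure ν]
    (hsupp : ν {z : ℂ | ‖z‖ ≠ 1} = 0)
    (hinf : ∀ s : Finset ℂ, ν ((s : Set ℂ))ᶜ ≠ 0)
    (hac : mCirc ≪ ν)
    (lam : ℝ) (hlam : Tendsto (smallestEig (momMat ν)) atTop (𝓝 lam)) :
    (0 < lam ↔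
      (∀ f ∈ polyClosure ν, MemLp (f : ℂ → ℂ) 2 mCirc) ∧
      ∃ C : ℝ, ∀ f ∈ polyClosure ν,
        ∫ z, ‖(f : ℂ → ℂ) z‖ ^ 2 ∂mCirc ≤ C * ∫ z, ‖(f : ℂ → ℂ) z‖ ^ 2 ∂ν) ∧
    (0 < lam →
      (∀ f ∈ polyClosure ν,
        ∫ z, ‖(f : ℂ → ℂ) z‖ ^ 2 ∂mCirc ≤ lam⁻¹ * ∫ z, ‖(f : ℂ → ℂ) z‖ ^ 2 ∂ν) ∧
      ∀ C : ℝ, (∀ f ∈ polyClosure ν,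
        ∫ z, ‖(f : ℂ → ℂ) z‖ ^ 2 ∂mCirc ≤ C * ∫ z, ‖(f : ℂ → ℂ) z‖ ^ 2 ∂ν) →
          lam⁻¹ ≤ C) := by
  have h1 : ∀ᵐ z ∂ν, ‖z‖ = 1 := by
    have hset : {z : ℂ | ‖z‖ = 1}ᶜ = {z : ℂ | ‖z‖ ≠ 1} := by ext z; simp
    have : {z : ℂ | ‖z‖ = 1} ∈ ae ν := by rw [mem_ae_iff, hset]; exact hsupp
    exact this
  have hkey : 0 < lam → ∀ f ∈ polyClosure ν,
      MemLp (f : ℂ → ℂ) 2 mCirc ∧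
        ∫ z, ‖(f : ℂ → ℂ) z‖^2 ∂mCirc ≤ lam⁻¹ * ∫ z, ‖(f : ℂ → ℂ) z‖^2 ∂ν := by
    intro hpos f hf
    exact key_closure ν hac lam⁻¹ (inv_nonneg.mpr hpos.le)
      (poly_bound ν h1 hlam hpos) f hf
  have hconv : ∀ C : ℝ, (∀ f ∈ polyClosure ν,
      ∫ z, ‖(f : ℂ → ℂ) z‖ ^ 2 ∂mCirc ≤ C * ∫ z, ‖(f : ℂ → ℂ) z‖ ^ 2 ∂ν) →
      0 < C ∧ 1/C ≤ lam := by
    intro C hC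
    have hv1 : (fun _ : Fin 1 => (1:ℂ)) ≠ 0 := by
      intro h; exact one_ne_zero (congrFun h 0)
    have hCpos : 0 < C := (converse_bound ν h1 hac C hC 0 _ hv1).1
    refine ⟨hCpos, ?_⟩
    refine ge_of_tendsto hlam (Eventually.of_forall (fun n => ?_))
    have : Nonempty {v : Fin (n + 1) → ℂ // v ≠ 0} := ⟨⟨fun _ => 1, by
      intro h; exact one_ne_zero (congrFun h 0)⟩⟩
    exact le_ciInf (fun v => (converse_bound ν h1 hac C hC n v.1 v.2).2)
  constructor
  · constructor
    · intro hpos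
      exact ⟨fun f hf => (hkey hpos f hf).1, ⟨lam⁻¹, fun f hf => (hkey hpos f hf).2⟩⟩
    · rintro ⟨-, C, hC⟩
      obtain ⟨hCpos, hle⟩ := hconv C hC
      exact lt_of_lt_of_le (by positivity) hle
  · intro hpos
    refine ⟨fun f hf => (hkey hpos f hf).2, ?_⟩
    intro C hC
    obtain ⟨hCpos, hle⟩ := hconv C hC
    rw [one_div] at hle
    calc lam⁻¹ ≤ (C⁻¹)⁻¹ := by
          apply inv_anti₀ (by positivity) hle
      _ = C := inv_inv C
end
end

section
/- Let ν_s be a positive measure on the unit circle 𝕋 with infinite support which is singular with respect to the normalized Lebesgue measure m on 𝕋. Then lim_{n→∞} λ_n(ν_s) = 0, where λ_n(ν_s) is the smallest eigenvalue of the (n+1)×(n+1) truncation of the moment matrix T(ν_s). -/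
open MeasureTheory Filter Matrix Set
open scoped ComplexOrder Topology Real

noncomputable section

set_option maxHeartbeats 1000000

def gfun (α : ℝ) (n : ℕ) (θ : ℝ) : ℝ := ((1 + Real.cos (θ - α))/2)^n

lemma gfun_nonneg (α : ℝ) (n : ℕ) (θ : ℝ) : 0 ≤ gfun α n θ := by
  apply pow_nonneg; nlinarith [Real.neg_one_le_cos (θ - α)]

lemma gfun_le_one (α : ℝ) (n : ℕ) (θ : ℝ) : gfun α n θ ≤ 1 := by
  apply pow_le_one₀ (by nlinarith [Real.neg_one_le_cos (θ - α)])
  nlinarith [Real.cos_le_one (θ - α)]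

lemma gfun_continuous (α : ℝ) (n : ℕ) : Continuous (gfun α n) := by
  unfold gfun; fun_prop


lemma wallisW (n : ℕ) :
    ∫ u in (-π)..π, (2 + 2*Real.cos u)^n = 2*π*(∑ k ∈ Finset.range (n+1), ((n.choose k : ℝ))^2) := by
  have h1 : ∀ k l : ℕ, k ≠ l → (∫ u in (-π)..π, Complex.exp (((k:ℂ)-l)*Complex.I*u)) = 0 := by
    intro k l hkl
    have hne : ((k:ℂ) - l) ≠ 0 := by
      rw [sub_ne_zero]
      exact_mod_cast fun h => hkl (Nat.cast_injective h)
    have hc : ((k:ℂ)-l)*Complex.I ≠ 0 := mul_ne_zero hne Complex.I_ne_zero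
    have : ∀ u : ℝ, (((k:ℂ)-l)*Complex.I*u : ℂ) = (((k:ℂ)-l)*Complex.I) * u := fun u => rfl
    rw [integral_exp_mul_complex hc, Complex.ofReal_neg]
    have hper : Complex.exp ((((k:ℂ)-l)*Complex.I) * π) = Complex.exp ((((k:ℂ)-l)*Complex.I) * (-π)) := by
      have h2 := Complex.exp_int_mul_two_pi_mul_I ((k:ℤ)-l)
      calc Complex.exp ((((k:ℂ)-l)*Complex.I) * π)
          = Complex.exp ((((k:ℂ)-l)*Complex.I) * (-π) + (((k:ℤ)-l : ℤ):ℂ) * (2*π*Complex.I)) := by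
            congr 1; push_cast; ring
        _ = Complex.exp ((((k:ℂ)-l)*Complex.I) * (-π)) * Complex.exp ((((k:ℤ)-l : ℤ):ℂ) * (2*π*Complex.I)) := Complex.exp_add _ _
        _ = Complex.exp ((((k:ℂ)-l)*Complex.I) * (-π)) := by rw [h2, mul_one]
    rw [hper, sub_self, zero_div]
  have hexp : ∀ u : ℝ, ((2:ℂ) + 2*Complex.cos u)^n
      = ∑ k ∈ Finset.range (n+1), ∑ l ∈ Finset.range (n+1),
          ((n.choose k : ℂ) * (n.choose l)) * Complex.exp (((k:ℂ)-l)*Complex.I*u) := by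
    intro u
    set E := Complex.exp ((u:ℂ)*Complex.I) with hE
    set F := Complex.exp (-((u:ℂ)*Complex.I)) with hF
    have hEF : E * F = 1 := by rw [hE, hF, ← Complex.exp_add]; simp
    have hcos : Complex.cos (u:ℂ) = (E + F)/2 := by
      rw [Complex.cos, hE, hF, neg_mul]
    have e1 : ((2:ℂ) + 2*Complex.cos u) = (E + 1) * (F + 1) := by
      rw [hcos]; linear_combination -hEF
    rw [e1, mul_pow, add_pow, add_pow]
    rw [Finset.sum_mul_sum]
    apply Finset.sum_congr rfl; intro k hk
    apply Finset.sum_congr rfl; intro l hl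
    have hEk : E^k = Complex.exp ((k:ℂ) * ((u:ℂ)*Complex.I)) := by
      rw [hE, ← Complex.exp_nat_mul]
    have hFl : F^l = Complex.exp ((l:ℂ) * (-((u:ℂ)*Complex.I))) := by
      rw [hF, ← Complex.exp_nat_mul]
    have : E^k * F^l = Complex.exp (((k:ℂ)-l)*Complex.I*u) := by
      rw [hEk, hFl, ← Complex.exp_add]; congr 1; push_cast; ring
    simp only [one_pow, mul_one]
    calc E ^ k * ↑(n.choose k) * (F ^ l * ↑(n.choose l))
        = ((n.choose k : ℂ) * (n.choose l)) * (E^k * F^l) := by ring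
      _ = ((n.choose k : ℂ) * (n.choose l)) * Complex.exp (((k:ℂ)-l)*Complex.I*u) := by rw [this]
  have hcont : ∀ k l : ℕ, Continuous (fun u : ℝ => ((n.choose k : ℂ) * (n.choose l)) * Complex.exp (((k:ℂ)-l)*Complex.I*u)) := by
    intro k l
    apply Continuous.mul continuous_const
    apply Complex.continuous_exp.comp
    exact (continuous_const.mul Complex.continuous_ofReal)
  have key : ∫ u in (-π)..π, ((2:ℂ) + 2*Complex.cos u)^n
      = 2*π*(∑ k ∈ Finset.range (n+1), ((n.choose k : ℝ))^2) := by
    rw [intervalIntegral.integral_congr (fun u _ => hexp u)]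
    have swap1 := intervalIntegral.integral_finset_sum (μ := volume) (a := -π) (b := π)
      (f := fun k u => ∑ l ∈ Finset.range (n+1), ((n.choose k : ℂ) * (n.choose l)) * Complex.exp (((k:ℂ)-l)*Complex.I*u))
      (fun k (_ : k ∈ Finset.range (n+1)) => (continuous_finset_sum _ (fun l _ => hcont k l)).intervalIntegrable _ _)
    rw [swap1]
    have hdiag : ∀ k ∈ Finset.range (n+1),
        (∫ u in (-π)..π, ∑ l ∈ Finset.range (n+1), ((n.choose k : ℂ) * (n.choose l)) * Complex.exp (((k:ℂ)-l)*Complex.I*u))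
          = ((n.choose k : ℂ))^2 * (2*π) := by
      intro k hk
      have swap2 := intervalIntegral.integral_finset_sum (μ := volume) (a := -π) (b := π)
        (f := fun l u => ((n.choose k : ℂ) * (n.choose l)) * Complex.exp (((k:ℂ)-l)*Complex.I*u))
        (fun l (_ : l ∈ Finset.range (n+1)) => (hcont k l).intervalIntegrable _ _)
      rw [swap2]
      have : ∀ l ∈ Finset.range (n+1),
          (∫ u in (-π)..π, ((n.choose k : ℂ) * (n.choose l)) * Complex.exp (((k:ℂ)-l)*Complex.I*u))
            = if l = k then ((n.choose k : ℂ))^2 * (2*π) else 0 := by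
        intro l _
        rw [intervalIntegral.integral_const_mul]
        by_cases hlk : l = k
        · subst hlk
          simp only [sub_self, zero_mul, Complex.exp_zero, if_true]
          rw [intervalIntegral.integral_const, Complex.real_smul]
          push_cast
          ring
        · rw [h1 k l (fun h => hlk h.symm), mul_zero, if_neg hlk]
      rw [Finset.sum_congr rfl this, Finset.sum_ite_eq' (Finset.range (n+1)) k]
      rw [if_pos hk]
    rw [Finset.sum_congr rfl hdiag]
    push_cast
    rw [← Finset.sum_mul]
    ring
  have hofReal : ((∫ u in (-π)..π, (2 + 2*Real.cos u)^n : ℝ) : ℂ)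
      = ∫ u in (-π)..π, ((2:ℂ) + 2*Complex.cos u)^n := by
    rw [← intervalIntegral.integral_ofReal]
    apply intervalIntegral.integral_congr
    intro u _
    push_cast [Complex.ofReal_cos]
    ring
  apply Complex.ofReal_injective
  rw [hofReal, key]
  push_cast
  ring

lemma integral_gfun (α : ℝ) (n : ℕ) :
    ∫ θ in Set.Ioo (α - π) (α + π), gfun α n θ
      = 2*π*(∑ k ∈ Finset.range (n+1), ((n.choose k : ℝ))^2) / 4^n := by
  have hle : α - π ≤ α + π := by linarith [Real.pi_pos]
  have h1 : ∫ θ in Set.Ioo (α - π) (α + π), gfun α n θ = ∫ θ in (α-π)..(α+π), gfun α n θ := by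
    rw [intervalIntegral.integral_of_le hle, MeasureTheory.integral_Ioc_eq_integral_Ioo]
  have h2 : ∫ θ in (α-π)..(α+π), gfun α n θ = ∫ u in (α-π-α)..(α+π-α), ((1 + Real.cos u)/2)^n := by
    rw [← intervalIntegral.integral_comp_sub_right (fun u => ((1 + Real.cos u)/2)^n) α]
    rfl
  have e1 : α - π - α = -π := by ring
  have e2 : α + π - α = π := by ring
  have h3 : ∀ u : ℝ, ((1 + Real.cos u)/2)^n = (2 + 2*Real.cos u)^n / 4^n := by
    intro u
    rw [eq_div_iff (by positivity), ← mul_pow]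
    congr 1; ring
  rw [h1, h2, e1, e2, intervalIntegral.integral_congr (fun u _ => h3 u),
    intervalIntegral.integral_div, wallisW]

lemma ae_norm_one (ν : Measure ℂ) (hsupp : ν {z : ℂ | ‖z‖ ≠ 1} = 0) :
    ∀ᵐ z ∂ν, ‖z‖ = 1 := by
  rw [ae_iff]; exact hsupp


lemma integrable_pow_mul (ν : Measure ℂ) [IsFiniteMeasure ν] (h : ∀ᵐ z ∂ν, ‖z‖ = 1)
    (i j : ℕ) : Integrable (fun z => z ^ i * (starRingEnd ℂ) z ^ j) ν := by
  refine Integrable.mono' (integrable_const (1:ℝ)) ?_ ?_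
  · exact ((continuous_pow i).mul ((Complex.continuous_conj).pow j)).aestronglyMeasurable
  · filter_upwards [h] with z hz
    simp only [norm_mul, norm_pow, RCLike.norm_conj, hz, one_pow, mul_one, le_refl]

lemma num_eq (ν : Measure ℂ) [IsFiniteMeasure ν] (h : ∀ᵐ z ∂ν, ‖z‖ = 1)
    {n : ℕ} (v : Fin (n+1) → ℂ) :
    (∑ i : Fin (n+1), ∑ j : Fin (n+1), v i * momMat ν i j * (starRingEnd ℂ) (v j)).re
      = ∫ z, Complex.normSq (∑ i : Fin (n+1), v i * z ^ (i:ℕ)) ∂ν := by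
  have hint : ∀ i j : Fin (n+1),
      Integrable (fun z : ℂ => v i * (z ^ (i:ℕ) * (starRingEnd ℂ) z ^ (j:ℕ)) * (starRingEnd ℂ) (v j)) ν :=
    fun i j => ((integrable_pow_mul ν h i j).const_mul _).mul_const _
  have step1 : ∀ i j : Fin (n+1), v i * momMat ν (i:ℕ) (j:ℕ) * (starRingEnd ℂ) (v j)
      = ∫ z, v i * (z ^ (i:ℕ) * (starRingEnd ℂ) z ^ (j:ℕ)) * (starRingEnd ℂ) (v j) ∂ν := by
    intro i j
    rw [momMat, ← integral_const_mul, ← integral_mul_const]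
  have step2 : (∑ i : Fin (n+1), ∑ j : Fin (n+1), v i * momMat ν i j * (starRingEnd ℂ) (v j))
      = ∫ z, ∑ i : Fin (n+1), ∑ j : Fin (n+1),
          v i * (z ^ (i:ℕ) * (starRingEnd ℂ) z ^ (j:ℕ)) * (starRingEnd ℂ) (v j) ∂ν := by
    rw [MeasureTheory.integral_finset_sum _ (fun i _ => integrable_finset_sum _ (fun j _ => hint i j))]
    apply Finset.sum_congr rfl; intro i _
    rw [MeasureTheory.integral_finset_sum _ (fun j _ => hint i j)]
    exact Finset.sum_congr rfl (fun j _ => step1 i j)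
  have step3 : ∀ z : ℂ, (∑ i : Fin (n+1), ∑ j : Fin (n+1),
        v i * (z ^ (i:ℕ) * (starRingEnd ℂ) z ^ (j:ℕ)) * (starRingEnd ℂ) (v j))
      = ((Complex.normSq (∑ i : Fin (n+1), v i * z ^ (i:ℕ)) : ℝ) : ℂ) := by
    intro z
    rw [← Complex.mul_conj, _root_.map_sum, Finset.sum_mul_sum]
    apply Finset.sum_congr rfl; intro i _
    apply Finset.sum_congr rfl; intro j _
    rw [_root_.map_mul, _root_.map_pow]
    ring
  rw [step2]
  rw [integral_congr_ae (Eventually.of_forall step3)]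
  have hsmul : (fun a : ℂ => ((Complex.normSq (∑ i : Fin (n+1), v i * a ^ (i:ℕ)) : ℝ) : ℂ))
      = fun a : ℂ => (Complex.normSq (∑ i : Fin (n+1), v i * a ^ (i:ℕ))) • (1:ℂ) := by
    funext a; rw [Complex.real_smul, mul_one]
  rw [hsmul, integral_smul_const]
  simp [Complex.real_smul]

lemma key_estimate (ρ : Measure ℝ) [IsFiniteMeasure ρ] {α δ ε : ℝ} (n : ℕ)
    (hδ : 0 < δ) (hδ2 : δ ≤ π/2) (hε : 0 < ε)
    (hρsupp : ρ (Set.Ioc (-π) π)ᶜ = 0)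
    (hα : |α| < π/2)
    (hball : ∀ r, 0 < r → r ≤ δ → ρ (Metric.closedBall α r) ≤ ENNReal.ofReal (ε * (2*r))) :
    ∫ θ, gfun α n θ ∂ρ ≤ ((1+Real.cos δ)/2)^n * (ρ Set.univ).toReal
      + ε * ∫ θ in Set.Ioo (α-π) (α+π), gfun α n θ := by
  have hπ := Real.pi_pos
  set q : ℝ := (1+Real.cos δ)/2 with hq
  have hcosδ : 0 ≤ Real.cos δ := Real.cos_nonneg_of_mem_Icc (Set.mem_Icc.mpr ⟨by linarith, hδ2⟩)
  have hq0 : 0 < q := by rw [hq]; linarith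
  set U : Set ℝ := Set.Ioo (α-π) (α+π) with hU
  have g_cont := gfun_continuous α n
  have g_mble : Measurable (gfun α n) := g_cont.measurable
  have g_nn := gfun_nonneg α n
  have g_le := gfun_le_one α n
  have gint : Integrable (gfun α n) ρ := by
    refine Integrable.mono' (integrable_const (1:ℝ)) g_cont.aestronglyMeasurable ?_
    exact Eventually.of_forall fun θ => by
      rw [Real.norm_eq_abs, abs_of_nonneg (g_nn θ)]; exact g_le θ
  have gintU : IntegrableOn (gfun α n) U volume :=
    (g_cont.integrableOn_Icc).mono_set Set.Ioo_subset_Icc_self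
  have hIU : 0 ≤ ∫ θ in U, gfun α n θ := integral_nonneg (fun θ => g_nn θ)
  -- pointwise bound on level-set measures
  have bound : ∀ t ∈ Set.Ioi (0:ℝ), ρ {a | t < gfun α n a}
      ≤ (Set.Ioc (0:ℝ) (q^n)).indicator (fun _ => ρ Set.univ) t
        + ENNReal.ofReal ε * (volume.restrict U) {a | t < gfun α n a} := by
    intro t ht
    by_cases htq : t ≤ q^n
    · rw [Set.indicator_of_mem (Set.mem_Ioc.mpr ⟨Set.mem_Ioi.mp ht, htq⟩) (fun _ => ρ Set.univ)]
      exact le_add_right (measure_mono (Set.subset_univ _))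
    push_neg at htq
    by_cases ht1 : 1 ≤ t
    · have : {a | t < gfun α n a} = ∅ := by
        ext a; simp only [Set.mem_setOf_eq, Set.mem_empty_iff_false, iff_false, not_lt]
        exact (g_le a).trans ht1
      rw [this]; simp
    push_neg at ht1
    have hn : n ≠ 0 := by
      intro h; rw [h, pow_zero] at htq; linarith
    set s : ℝ := t ^ ((n:ℝ)⁻¹) with hs
    have ht0 : (0:ℝ) < t := ht
    have hs0 : 0 < s := Real.rpow_pos_of_pos ht0 _
    have hsn : s ^ n = t := Real.rpow_inv_natCast_pow ht0.le hn
    have hsq : q < s := by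
      apply lt_of_pow_lt_pow_left₀ n hs0.le
      rw [hsn]; exact htq
    have hs1 : s < 1 := Real.rpow_lt_one ht0.le ht1 (by positivity)
    set c : ℝ := 2*s - 1 with hc
    have hcl : Real.cos δ < c := by rw [hc, hq] at *; linarith
    have hc1 : c ≤ 1 := by rw [hc]; linarith
    have hcm1 : (-1:ℝ) ≤ c := by linarith
    set r : ℝ := Real.arccos c with hr
    have hr0 : 0 < r := Real.arccos_pos.mpr (by rw [hc]; linarith)
    have hrpi : r ≤ π := Real.arccos_le_pi c
    have hcosr : Real.cos r = c := Real.cos_arccos hcm1 hc1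
    have hrδ : r < δ := by
      have hδeq : Real.arccos (Real.cos δ) = δ := Real.arccos_cos hδ.le (by linarith)
      have := Real.strictAntiOn_arccos (Set.mem_Icc.mpr ⟨by linarith, Real.cos_le_one δ⟩)
        (Set.mem_Icc.mpr ⟨hcm1, hc1⟩) hcl
      rw [hδeq] at this; exact this
    -- from t < gfun θ deduce c < cos (θ - α)
    have hlevel : ∀ θ : ℝ, t < gfun α n θ → c < Real.cos (θ - α) := by
      intro θ hθ
      by_contra hle
      push_neg at hle
      have h2 : (1 + Real.cos (θ-α))/2 ≤ s := by rw [hc] at hle; linarith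
      have : gfun α n θ ≤ t := by
        rw [← hsn]
        exact pow_le_pow_left₀ (by nlinarith [Real.neg_one_le_cos (θ-α)]) h2 n
      linarith
    have hlevel2 : ∀ θ : ℝ, |θ - α| < r → t < gfun α n θ := by
      intro θ hθr
      have h1 : Real.cos r < Real.cos |θ - α| :=
        Real.cos_lt_cos_of_nonneg_of_le_pi (abs_nonneg _) hrpi hθr
      rw [Real.cos_abs] at h1
      rw [hcosr] at h1
      have h2 : s < (1 + Real.cos (θ-α))/2 := by rw [hc] at h1; linarith
      have := pow_lt_pow_left₀ h2 hs0.le hn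
      rw [hsn] at this
      exact this
    have claimA : {a | t < gfun α n a} ⊆ Metric.closedBall α r ∪ (Set.Ioc (-π) π)ᶜ := by
      intro θ hθ
      by_cases hmem : θ ∈ Set.Ioc (-π) π
      · left
        rw [Metric.mem_closedBall, Real.dist_eq]
        by_contra hgt
        push_neg at hgt
        have hcx := hlevel θ hθ
        by_cases hpi : |θ - α| ≤ π
        · have : Real.cos |θ-α| ≤ Real.cos r :=
            Real.cos_le_cos_of_nonneg_of_le_pi hr0.le hpi hgt.le
          rw [Real.cos_abs, hcosr] at this
          linarith
        · push_neg at hpi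
          have habs : |θ - α| ≤ |θ| + |α| := abs_sub _ _
          have hθb : |θ| ≤ π := abs_le.mpr ⟨by linarith [hmem.1], hmem.2⟩
          have : Real.cos |θ-α| ≤ 0 := by
            apply Real.cos_nonpos_of_pi_div_two_le_of_le (by linarith)
            linarith [abs_le.mp (le_refl |θ-α|)]
          rw [Real.cos_abs] at this
          linarith
      · right; exact hmem
    have hmeasA : ρ {a | t < gfun α n a} ≤ ENNReal.ofReal (ε * (2*r)) := by
      calc ρ {a | t < gfun α n a} ≤ ρ (Metric.closedBall α r ∪ (Set.Ioc (-π) π)ᶜ) :=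
            measure_mono claimA
        _ ≤ ρ (Metric.closedBall α r) + ρ ((Set.Ioc (-π) π)ᶜ) := measure_union_le _ _
        _ = ρ (Metric.closedBall α r) := by rw [hρsupp, add_zero]
        _ ≤ ENNReal.ofReal (ε * (2*r)) := hball r hr0 hrδ.le
    have claimB : (volume.restrict U) {a | t < gfun α n a} = ENNReal.ofReal (2*r) := by
      rw [Measure.restrict_apply (measurableSet_lt measurable_const g_mble)]
      have hset : {a | t < gfun α n a} ∩ U = Set.Ioo (α-r) (α+r) := by
        ext θ
        simp only [Set.mem_inter_iff, Set.mem_setOf_eq, hU, Set.mem_Ioo]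
        constructor
        · rintro ⟨hθ, hθU⟩
          have hcx := hlevel θ hθ
          have habs : |θ - α| < r := by
            by_contra hge
            push_neg at hge
            have hpi : |θ - α| ≤ π := abs_le.mpr ⟨by linarith [hθU.1], by linarith [hθU.2]⟩
            have : Real.cos |θ-α| ≤ Real.cos r :=
              Real.cos_le_cos_of_nonneg_of_le_pi hr0.le hpi hge
            rw [Real.cos_abs, hcosr] at this
            linarith
          rw [abs_lt] at habs
          constructor <;> linarith [habs.1, habs.2]
        · intro hθ
          have habs : |θ - α| < r := by rw [abs_lt]; constructor <;> linarith [hθ.1, hθ.2]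
          refine ⟨hlevel2 θ habs, ?_, ?_⟩
          · have := (abs_lt.mp habs).1; linarith
          · have := (abs_lt.mp habs).2; linarith
      rw [hset, Real.volume_Ioo]
      congr 1; ring
    rw [Set.indicator_of_notMem (fun hmem => absurd hmem.2 (not_le.mpr htq)), zero_add, claimB]
    calc ρ {a | t < gfun α n a} ≤ ENNReal.ofReal (ε * (2*r)) := hmeasA
      _ = ENNReal.ofReal ε * ENNReal.ofReal (2*r) := ENNReal.ofReal_mul hε.le
  -- assemble via layer cake
  have l1 : ENNReal.ofReal (∫ θ, gfun α n θ ∂ρ) = ∫⁻ θ, ENNReal.ofReal (gfun α n θ) ∂ρ :=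
    ofReal_integral_eq_lintegral_ofReal gint (Eventually.of_forall g_nn)
  have l2 : ∫⁻ θ, ENNReal.ofReal (gfun α n θ) ∂ρ = ∫⁻ t in Set.Ioi 0, ρ {a | t < gfun α n a} :=
    lintegral_eq_lintegral_meas_lt ρ (Eventually.of_forall g_nn) g_mble.aemeasurable
  have l3 : ∫⁻ t in Set.Ioi 0, ρ {a | t < gfun α n a}
      ≤ ∫⁻ t in Set.Ioi 0, ((Set.Ioc (0:ℝ) (q^n)).indicator (fun _ => ρ Set.univ) t
          + ENNReal.ofReal ε * (volume.restrict U) {a | t < gfun α n a}) := by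
    apply lintegral_mono_ae
    rw [ae_restrict_iff' measurableSet_Ioi]
    exact Eventually.of_forall bound
  have l4 : ∫⁻ t in Set.Ioi 0, ((Set.Ioc (0:ℝ) (q^n)).indicator (fun _ => ρ Set.univ) t
          + ENNReal.ofReal ε * (volume.restrict U) {a | t < gfun α n a})
      = (∫⁻ t in Set.Ioi 0, (Set.Ioc (0:ℝ) (q^n)).indicator (fun _ => ρ Set.univ) t)
        + ENNReal.ofReal ε * ∫⁻ t in Set.Ioi 0, (volume.restrict U) {a | t < gfun α n a} := by
    rw [lintegral_add_left (measurable_const.indicator measurableSet_Ioc)]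
    congr 1
    exact lintegral_const_mul' _ _ ENNReal.ofReal_ne_top
  have l5 : (∫⁻ t in Set.Ioi 0, (Set.Ioc (0:ℝ) (q^n)).indicator (fun _ => ρ Set.univ) t)
      = ρ Set.univ * ENNReal.ofReal (q^n) := by
    rw [lintegral_indicator measurableSet_Ioc, setLIntegral_const,
      Measure.restrict_apply measurableSet_Ioc,
      Set.inter_eq_self_of_subset_left Set.Ioc_subset_Ioi_self, Real.volume_Ioc, sub_zero]
  have l6 : ∫⁻ t in Set.Ioi 0, (volume.restrict U) {a | t < gfun α n a}
      = ENNReal.ofReal (∫ θ in U, gfun α n θ) := by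
    rw [← lintegral_eq_lintegral_meas_lt (volume.restrict U) (Eventually.of_forall g_nn)
        g_mble.aemeasurable]
    rw [← ofReal_integral_eq_lintegral_ofReal gintU (Eventually.of_forall g_nn)]
  have total : ENNReal.ofReal (∫ θ, gfun α n θ ∂ρ)
      ≤ ENNReal.ofReal (q^n * (ρ Set.univ).toReal + ε * ∫ θ in U, gfun α n θ) := by
    rw [l1, l2]
    refine le_trans l3 ?_
    rw [l4, l5, l6]
    have hfin : ρ Set.univ ≠ ⊤ := measure_ne_top ρ _
    have e : ρ Set.univ * ENNReal.ofReal (q^n) = ENNReal.ofReal ((ρ Set.univ).toReal * q^n) := by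
      rw [ENNReal.ofReal_mul ENNReal.toReal_nonneg, ENNReal.ofReal_toReal hfin]
    rw [e, ← ENNReal.ofReal_mul hε.le, ← ENNReal.ofReal_add (by positivity) (by positivity)]
    apply ENNReal.ofReal_le_ofReal
    apply add_le_add_left
    apply le_of_eq; ring
  have hrhs : (0:ℝ) ≤ q^n * (ρ Set.univ).toReal + ε * ∫ θ in U, gfun α n θ := by positivity
  have := (ENNReal.ofReal_le_ofReal_iff hrhs).mp total
  linarith [this]

-- auxiliary bounds on smallestEig
lemma smallestEig_nonneg (ν : Measure ℂ) [IsFiniteMeasure ν] (h : ∀ᵐ z ∂ν, ‖z‖ = 1) (n : ℕ) :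
    0 ≤ smallestEig (momMat ν) n := by
  haveI : Nonempty {v : Fin (n + 1) → ℂ // v ≠ 0} :=
    ⟨⟨fun _ => 1, fun h => one_ne_zero (congrFun h 0)⟩⟩
  apply le_ciInf
  intro w
  apply div_nonneg
  · rw [num_eq ν h w.1]
    exact integral_nonneg fun z => Complex.normSq_nonneg _
  · exact Finset.sum_nonneg fun i _ => Complex.normSq_nonneg _

lemma smallestEig_le_s15 (ν : Measure ℂ) [IsFiniteMeasure ν] (h : ∀ᵐ z ∂ν, ‖z‖ = 1) {n : ℕ}
    (v : Fin (n+1) → ℂ) (hv : v ≠ 0) :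
    smallestEig (momMat ν) n
      ≤ (∫ z, Complex.normSq (∑ i : Fin (n+1), v i * z ^ (i:ℕ)) ∂ν) / ∑ i, Complex.normSq (v i) := by
  have hbdd : BddBelow (Set.range fun w : {v : Fin (n + 1) → ℂ // v ≠ 0} =>
      (∑ i : Fin (n + 1), ∑ j : Fin (n + 1), w.1 i * momMat ν i j * (starRingEnd ℂ) (w.1 j)).re
        / ∑ i, Complex.normSq (w.1 i)) := by
    refine ⟨0, ?_⟩
    rintro x ⟨w, rfl⟩
    apply div_nonneg
    · rw [num_eq ν h w.1]
      exact integral_nonneg fun z => Complex.normSq_nonneg _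
    · exact Finset.sum_nonneg fun i _ => Complex.normSq_nonneg _
  have := ciInf_le hbdd (⟨v, hv⟩ : {v : Fin (n + 1) → ℂ // v ≠ 0})
  rw [num_eq ν h v] at this
  exact this

set_option maxHeartbeats 2000000 in
/-- for a measure on the unit circle with infinite support which is
singular with respect to the normalized Lebesgue measure, `λ_n → 0`. -/
theorem stmt15 (νs : Measure ℂ) [IsFiniteMeasure νs]
    (hsupp : νs {z : ℂ | ‖z‖ ≠ 1} = 0)
    (hinf : ∀ s : Finset ℂ, νs ((s : Set ℂ))ᶜ ≠ 0)
    (hsing : νs.MutuallySingular mCirc) :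
    Tendsto (smallestEig (momMat νs)) atTop (𝓝 0) := by
  have hπ := Real.pi_pos
  have hae : ∀ᵐ z ∂νs, ‖z‖ = 1 := ae_norm_one νs hsupp
  set νR : Measure ℝ := νs.map Complex.arg with hνRdef
  haveI : IsFiniteMeasure νR := by
    constructor
    rw [hνRdef, Measure.map_apply Complex.measurable_arg MeasurableSet.univ]
    exact measure_lt_top νs _
  have hνRsupp : νR (Set.Ioc (-π) π)ᶜ = 0 := by
    rw [hνRdef, Measure.map_apply Complex.measurable_arg measurableSet_Ioc.compl]
    have : Complex.arg ⁻¹' (Set.Ioc (-π) π)ᶜ = ∅ := by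
      ext z
      simp only [Set.mem_preimage, Set.mem_compl_iff, Set.mem_empty_iff_false, iff_false,
        not_not]
      exact Complex.arg_mem_Ioc z
    rw [this, measure_empty]
  -- singularity transfer to ℝ
  have hsingR : νR.MutuallySingular (volume : Measure ℝ) := by
    obtain ⟨S, hSm, hS1, hS2⟩ := hsing
    have hfm : Measurable (fun θ : ℝ => Complex.exp ((θ:ℂ) * Complex.I)) :=
      Complex.measurable_exp.comp (Complex.measurable_ofReal.mul_const Complex.I)
    set T : Set ℝ := (fun θ : ℝ => Complex.exp ((θ:ℂ) * Complex.I)) ⁻¹' S with hT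
    have hTm : MeasurableSet T := hfm hSm
    -- νR T = 0
    have hνRT : νR T = 0 := by
      rw [hνRdef, Measure.map_apply Complex.measurable_arg hTm]
      apply measure_mono_null (t := S ∪ {z : ℂ | ‖z‖ ≠ 1}) ?_ ?_
      · intro z hz
        by_cases hz1 : ‖z‖ = 1
        · left
          have habs : ‖z‖ = 1 := hz1
          have := Complex.norm_mul_exp_arg_mul_I z
          rw [habs, Complex.ofReal_one, one_mul] at this
          have hz' : Complex.exp ((z.arg:ℂ) * Complex.I) ∈ S := hz
          rwa [this] at hz'
        · right; exact hz1
      · exact measure_union_null hS1 hsupp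
    -- volume Tᶜ = 0
    have hE0 : volume (Tᶜ ∩ Set.Ioc 0 (2*π)) = 0 := by
      have h1 : mCirc Sᶜ = 0 := hS2
      rw [mCirc] at h1
      rw [Measure.smul_apply, smul_eq_mul] at h1
      have h2 : (Measure.map (fun θ : ℝ => Complex.exp ((θ:ℂ) * Complex.I))
          (volume.restrict (Set.Ioc 0 (2*π)))) Sᶜ = 0 := by
        rcases mul_eq_zero.mp h1 with h | h
        · exfalso
          have : (ENNReal.ofReal (2*π))⁻¹ ≠ 0 := by
            exact ENNReal.inv_ne_zero.mpr ENNReal.ofReal_ne_top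
          exact this h
        · exact h
      rw [Measure.map_apply hfm hSm.compl, Measure.restrict_apply (hfm hSm.compl)] at h2
      have : Tᶜ = (fun θ : ℝ => Complex.exp ((θ:ℂ) * Complex.I)) ⁻¹' Sᶜ := by
        rw [hT, Set.preimage_compl]
      rw [this]
      exact h2
    have hper : ∀ (θ : ℝ) (k : ℤ),
        Complex.exp (((θ - k*(2*π) : ℝ) : ℂ) * Complex.I) = Complex.exp ((θ:ℂ) * Complex.I) := by
      intro θ k
      rw [show (((θ - k*(2*π) : ℝ)):ℂ) * Complex.I
          = (θ:ℂ)*Complex.I - (k:ℂ)*(2*(π:ℂ)*Complex.I) by push_cast; ring]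
      rw [Complex.exp_sub, Complex.exp_int_mul_two_pi_mul_I, div_one]
    have hEsub : Tᶜ ⊆ ⋃ k : ℤ, (fun θ : ℝ => θ + (-(k*(2*π)))) ⁻¹' (Tᶜ ∩ Set.Ioc 0 (2*π)) := by
      intro θ hθ
      have hex := sub_toIocDiv_zsmul_mem_Ioc Real.two_pi_pos 0 θ
      set k := toIocDiv Real.two_pi_pos 0 θ with hk
      rw [Set.mem_iUnion]
      refine ⟨k, ?_⟩
      simp only [Set.mem_preimage, Set.mem_inter_iff, Set.mem_compl_iff]
      have heq : θ + -(k*(2*π)) = θ - k*(2*π) := by ring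
      rw [heq]
      constructor
      · intro hmem
        apply hθ
        rw [hT, Set.mem_preimage] at hmem ⊢
        rwa [hper θ k] at hmem
      · have : θ - k • (2*π) ∈ Set.Ioc 0 (0 + 2*π) := hex
        rw [zero_add] at this
        rwa [zsmul_eq_mul] at this
    have hEall : volume Tᶜ = 0 := by
      apply measure_mono_null hEsub
      apply le_antisymm ?_ (zero_le)
      calc volume (⋃ k : ℤ, (fun θ : ℝ => θ + (-(k*(2*π)))) ⁻¹' (Tᶜ ∩ Set.Ioc 0 (2*π)))
          ≤ ∑' k : ℤ, volume ((fun θ : ℝ => θ + (-((k:ℝ)*(2*π)))) ⁻¹' (Tᶜ ∩ Set.Ioc 0 (2*π))) :=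
            measure_iUnion_le _
        _ = ∑' k : ℤ, volume (Tᶜ ∩ Set.Ioc 0 (2*π)) := by
            congr 1; funext k
            exact measure_preimage_add_right volume _ _
        _ = 0 := by rw [hE0]; simp
    exact ⟨T, hTm, hνRT, hEall⟩
  -- Besicovitch differentiation
  have hrn : νR.rnDeriv volume =ᵐ[volume] 0 := (Measure.rnDeriv_eq_zero νR volume).mpr hsingR
  have hae2 : ∀ᵐ x ∂(volume : Measure ℝ), Tendsto
      (fun r => νR (Metric.closedBall x r) / volume (Metric.closedBall x r)) (𝓝[>] 0) (𝓝 0) := by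
    filter_upwards [Besicovitch.ae_tendsto_rnDeriv νR volume, hrn] with x h1 h2
    rw [h2] at h1
    exact h1
  obtain ⟨α, hαmem, hαlim⟩ : ∃ α, α ∈ Set.Ioo (-(π/2)) (π/2) ∧ Tendsto
      (fun r => νR (Metric.closedBall α r) / volume (Metric.closedBall α r)) (𝓝[>] 0) (𝓝 0) := by
    by_contra hcon
    push_neg at hcon
    have hsub : Set.Ioo (-(π/2)) (π/2) ⊆ {x : ℝ | ¬ Tendsto
        (fun r => νR (Metric.closedBall x r) / volume (Metric.closedBall x r)) (𝓝[>] 0) (𝓝 0)} :=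
      fun x hx => hcon x hx
    have h0 : volume (Set.Ioo (-(π/2)) (π/2)) = 0 := measure_mono_null hsub hae2
    rw [Real.volume_Ioo] at h0
    rw [ENNReal.ofReal_eq_zero] at h0
    linarith
  have hαabs : |α| < π/2 := abs_lt.mpr ⟨hαmem.1, hαmem.2⟩
  clear_value νR
  -- final limit via ε-N
  rw [Metric.tendsto_atTop]
  intro ε' hε'
  set ε : ℝ := ε'/(8*π) with hεdef
  have hε : 0 < ε := by positivity
  -- find δ from hαlim
  have hev : ∀ᶠ r in 𝓝[>] (0:ℝ),
      νR (Metric.closedBall α r) / volume (Metric.closedBall α r) < ENNReal.ofReal ε :=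
    hαlim.eventually_lt_const (by simp [hε])
  obtain ⟨δ', hδ'pos, hδ'⟩ := (nhdsGT_basis (0:ℝ)).eventually_iff.mp hev
  set δ : ℝ := min (δ'/2) (π/2) with hδdef
  have hδpos : 0 < δ := lt_min (by linarith) (by linarith)
  have hδle : δ ≤ π/2 := min_le_right _ _
  have hball : ∀ r, 0 < r → r ≤ δ → νR (Metric.closedBall α r) ≤ ENNReal.ofReal (ε * (2*r)) := by
    intro r hr0 hrδ
    have hrδ' : r ∈ Set.Ioo 0 δ' := ⟨hr0, by
      have := min_le_left (δ'/2) (π/2); simp only [← hδdef] at this; linarith [le_trans hrδ this]⟩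
    have hlt := hδ' hrδ'
    rw [Real.volume_closedBall] at hlt
    have h2r : ENNReal.ofReal (2*r) ≠ 0 := by
      simp [ENNReal.ofReal_eq_zero]; linarith
    rw [ENNReal.div_lt_iff (Or.inl h2r) (Or.inl ENNReal.ofReal_ne_top)] at hlt
    calc νR (Metric.closedBall α r) ≤ ENNReal.ofReal ε * ENNReal.ofReal (2*r) := hlt.le
      _ = ENNReal.ofReal (ε * (2*r)) := (ENNReal.ofReal_mul hε.le).symm
  -- the coefficient vector
  set a : ℂ := Complex.exp ((α:ℂ) * Complex.I) with hadef
  set T : ℝ := (νR Set.univ).toReal with hTdef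
  have hT0 : 0 ≤ T := ENNReal.toReal_nonneg
  set q : ℝ := (1 + Real.cos δ)/2 with hqdef
  have hcosδ1 : Real.cos δ < 1 := by
    have := Real.cos_lt_cos_of_nonneg_of_le_pi (le_refl 0) (by linarith) hδpos
    rwa [Real.cos_zero] at this
  have hcosδ0 : 0 ≤ Real.cos δ := Real.cos_nonneg_of_mem_Icc (Set.mem_Icc.mpr ⟨by linarith, hδle⟩)
  have hq0 : 0 ≤ q := by rw [hqdef]; linarith
  have hq1 : q < 1 := by rw [hqdef]; linarith
  -- per-n estimate
  have hmain : ∀ n : ℕ, smallestEig (momMat νs) n ≤ ((n:ℝ)+1) * q^n * T + 2*π*ε := by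
    intro n
    set v : Fin (n+1) → ℂ := fun i => ((n.choose (i:ℕ) : ℕ) : ℂ) * ((starRingEnd ℂ) a)^(i:ℕ) with hvdef
    have hv0 : v ≠ 0 := by
      intro h
      have := congrFun h 0
      simp [hvdef] at this
    set D : ℝ := ∑ k ∈ Finset.range (n+1), ((n.choose k : ℝ))^2 with hDdef
    have hD1 : (1:ℝ) ≤ D := by
      rw [hDdef]
      calc (1:ℝ) = ((n.choose 0 : ℝ))^2 := by simp
        _ ≤ ∑ k ∈ Finset.range (n+1), ((n.choose k : ℝ))^2 :=
          Finset.single_le_sum (f := fun k => ((n.choose k : ℝ))^2) (fun i _ => sq_nonneg _) (Finset.mem_range.mpr (Nat.succ_pos n))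
    have hD0 : 0 < D := lt_of_lt_of_le one_pos hD1
    have hD4 : (4:ℝ)^n ≤ ((n:ℝ)+1) * D := by
      have h1 : (∑ k ∈ Finset.range (n+1), ((n.choose k : ℝ)))^2
          ≤ ((Finset.range (n+1)).card : ℝ) * ∑ k ∈ Finset.range (n+1), ((n.choose k : ℝ))^2 :=
        sq_sum_le_card_mul_sum_sq
      have h2 : ∑ k ∈ Finset.range (n+1), ((n.choose k : ℝ)) = 2^n := by
        rw [← Nat.cast_sum]
        rw [Nat.sum_range_choose]
        push_cast; ring
      rw [h2, Finset.card_range] at h1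
      calc (4:ℝ)^n = (2^n)^2 := by rw [← pow_mul, pow_mul']; norm_num
        _ ≤ ((n:ℝ)+1) * D := by rw [hDdef]; push_cast at h1 ⊢; linarith
    -- denominator
    have hden : ∑ i : Fin (n+1), Complex.normSq (v i) = D := by
      rw [hDdef, Fin.sum_univ_eq_sum_range (fun k => Complex.normSq (((n.choose k : ℕ):ℂ) * ((starRingEnd ℂ) a)^k))]
      apply Finset.sum_congr rfl
      intro k _
      have hnsa : Complex.normSq a = 1 := by
        rw [hadef, Complex.normSq_eq_norm_sq, Complex.norm_exp_ofReal_mul_I]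
        norm_num
      rw [_root_.map_mul, _root_.map_pow, Complex.normSq_conj, hnsa, one_pow, mul_one]
      rw [show ((n.choose k : ℕ):ℂ) = (((n.choose k : ℕ):ℝ):ℂ) by push_cast; ring]
      rw [Complex.normSq_ofReal]
      ring
    -- numerator via gfun
    have hpoly : ∀ z : ℂ, ‖z‖ = 1 →
        Complex.normSq (∑ i : Fin (n+1), v i * z ^ (i:ℕ)) = 4^n * gfun α n (Complex.arg z) := by
      intro z hz
      have habs : ‖z‖ = 1 := hz
      have hzexp : Complex.exp ((Complex.arg z : ℂ) * Complex.I) = z := by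
        have := Complex.norm_mul_exp_arg_mul_I z
        rwa [habs, Complex.ofReal_one, one_mul] at this
      have hsum : (∑ i : Fin (n+1), v i * z ^ (i:ℕ)) = (1 + (starRingEnd ℂ) a * z)^n := by
        rw [add_comm (1:ℂ) ((starRingEnd ℂ) a * z), add_pow]
        rw [Fin.sum_univ_eq_sum_range (fun k => (((n.choose k : ℕ)):ℂ) * ((starRingEnd ℂ) a)^k * z^k)]
        apply Finset.sum_congr rfl
        intro k _
        rw [one_pow, mul_one, mul_pow]
        ring
      have hw : (starRingEnd ℂ) a * z = Complex.exp (((Complex.arg z - α : ℝ) : ℂ) * Complex.I) := by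
        have hconj : (starRingEnd ℂ) a = Complex.exp (-((α:ℂ) * Complex.I)) := by
          rw [hadef, ← Complex.exp_conj, _root_.map_mul, Complex.conj_ofReal, Complex.conj_I, mul_neg]
        rw [hconj]
        calc Complex.exp (-((α:ℂ)*Complex.I)) * z
            = Complex.exp (-((α:ℂ)*Complex.I)) * Complex.exp ((z.arg:ℂ)*Complex.I) := by rw [hzexp]
          _ = Complex.exp (((Complex.arg z - α : ℝ):ℂ) * Complex.I) := by
              rw [← Complex.exp_add]; congr 1; push_cast; ring
      have hns : Complex.normSq (1 + (starRingEnd ℂ) a * z) = 2 + 2*Real.cos (Complex.arg z - α) := by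
        rw [hw]
        rw [show (((Complex.arg z - α : ℝ)):ℂ) * Complex.I = ((Complex.arg z - α : ℝ):ℂ) * Complex.I from rfl]
        rw [Complex.exp_mul_I]
        rw [← Complex.ofReal_cos, ← Complex.ofReal_sin]
        rw [Complex.normSq_apply]
        simp only [Complex.add_re, Complex.one_re, Complex.ofReal_re, Complex.add_im,
          Complex.one_im, Complex.ofReal_im, Complex.mul_re, Complex.mul_im, Complex.I_re,
          Complex.I_im]
        ring_nf
        nlinarith [Real.sin_sq_add_cos_sq (Complex.arg z - α)]
      rw [hsum, _root_.map_pow, hns]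
      unfold gfun
      rw [← mul_pow]
      congr 1
      ring
    clear_value v a
    have hnum : (∫ z, Complex.normSq (∑ i : Fin (n+1), v i * z ^ (i:ℕ)) ∂νs)
        = 4^n * ∫ θ, gfun α n θ ∂νR := by
      have h1 : (∫ z, Complex.normSq (∑ i : Fin (n+1), v i * z ^ (i:ℕ)) ∂νs)
          = ∫ z, 4^n * gfun α n (Complex.arg z) ∂νs := by
        apply integral_congr_ae
        filter_upwards [hae] with z hz
        exact hpoly z hz
      rw [h1, hνRdef, ← MeasureTheory.integral_const_mul]
      exact (integral_map Complex.measurable_arg.aemeasurable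
        (Continuous.aestronglyMeasurable (continuous_const.mul (gfun_continuous α n)))).symm
    -- apply key estimate
    have hkey := key_estimate νR n hδpos hδle hε hνRsupp hαabs hball
    have hIg := integral_gfun α n
    have hest : ∫ θ, gfun α n θ ∂νR ≤ q^n * T + ε * (2*π*D/4^n) := by
      rw [← hqdef, ← hTdef] at hkey
      rw [hIg, ← hDdef] at hkey
      exact hkey
    have hle := smallestEig_le_s15 νs hae v hv0
    rw [hden, hnum] at hle
    have h4n : (0:ℝ) < 4^n := by positivity
    calc smallestEig (momMat νs) n ≤ 4^n * (∫ θ, gfun α n θ ∂νR) / D := hle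
      _ ≤ 4^n * (q^n * T + ε * (2*π*D/4^n)) / D := by
          gcongr
      _ = (4^n / D) * q^n * T + 2*π*ε := by
          field_simp
      _ ≤ ((n:ℝ)+1) * q^n * T + 2*π*ε := by
          have h1 : (4:ℝ)^n / D ≤ (n:ℝ)+1 := by
            rw [div_le_iff₀ hD0]; linarith
          have h2 : 0 ≤ q^n * T := by positivity
          nlinarith [pow_nonneg hq0 n]
  -- conclude
  have htend : Tendsto (fun n : ℕ => ((n:ℝ)+1) * q^n * T + 2*π*ε) atTop (𝓝 (2*π*ε)) := by
    have h1 : Tendsto (fun n : ℕ => ((n:ℝ))^1 * q^n) atTop (𝓝 0) :=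
      (summable_pow_mul_geometric_of_norm_lt_one (R := ℝ) 1 (by rwa [Real.norm_eq_abs, abs_of_nonneg hq0])).tendsto_atTop_zero
    have h2 : Tendsto (fun n : ℕ => q^n) atTop (𝓝 0) :=
      tendsto_pow_atTop_nhds_zero_of_lt_one hq0 hq1
    have h3 : Tendsto (fun n : ℕ => (((n:ℝ))^1 * q^n + q^n) * T) atTop (𝓝 ((0+0)*T)) :=
      ((h1.add h2).mul_const T)
    have h4 : (fun n : ℕ => ((n:ℝ)+1) * q^n * T + 2*π*ε)
        = fun n : ℕ => ((((n:ℝ))^1 * q^n + q^n) * T) + 2*π*ε := by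
      funext n; ring
    rw [h4]
    have h5 := h3.add_const (2*π*ε)
    norm_num at h5 ⊢
    exact h5
  have h2πε : 2*π*ε < ε'/2 := by
    rw [hεdef, show 2*π*(ε'/(8*π)) = ε'/4 by field_simp; ring]
    linarith
  have hev2 : ∀ᶠ n : ℕ in atTop, ((n:ℝ)+1) * q^n * T + 2*π*ε < ε' := by
    have := htend.eventually_lt_const (show 2*π*ε < ε' by linarith [h2πε, hε'])
    exact this
  obtain ⟨N, hN⟩ := hev2.exists_forall_of_atTop
  refine ⟨N, fun n hn => ?_⟩
  rw [Real.dist_eq, sub_zero, abs_of_nonneg (smallestEig_nonneg νs hae n)]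
  exact lt_of_le_of_lt (hmain n) (hN n hn)
end
end
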